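/- arXiv:2406.12344 — 5 statements merged into one kernel-verified Lean document; each statement's English description precedes it below -/
import Mathlib

section
/- For x > 0, the function φ(x) = 1 + 2∑_{n=1}^∞ (-1)^n e^{-π n² x} satisfies the identity φ(x) = (2/√x) ∑_{n=0}^∞ e^{-π(n+1/2)²/x}. -/
open Real

private lemma aux_summable {c : ℝ} (hc : 0 < c) {a : ℝ} (ha : 0 ≤ a) :
    Summable fun n : ℕ => Real.exp (-c * ((n : ℝ) + a) ^ 2) := by
  have hgeo : Summable fun n : ℕ => Real.exp (-c) ^ n :=
    summable_geometric_of_lt_one (Real.exp_pos _).le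
      (Real.exp_lt_one_iff.2 (neg_neg_iff_pos.2 hc))
  refine hgeo.of_nonneg_of_le (fun n => (Real.exp_pos _).le) fun n => ?_
  rw [← Real.exp_nat_mul]
  apply Real.exp_le_exp.2
  have h2 : (n : ℝ) ≤ (n : ℝ) ^ 2 := by
    exact_mod_cast Nat.cast_le.2 (Nat.le_self_pow two_ne_zero n)
  have h1 : (n : ℝ) ≤ ((n : ℝ) + a) ^ 2 := by
    nlinarith [mul_nonneg (Nat.cast_nonneg (α := ℝ) n) ha, sq_nonneg a]
  nlinarith

/-- For `x > 0`, `φ(x) = 1 + 2∑_{n=1}^∞ (-1)^n e^{-π n² x}`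
equals `(2/√x) ∑_{n=0}^∞ e^{-π(n+1/2)²/x}`. -/
theorem phi_theta_transformation (x : ℝ) (hx : 0 < x) :
    1 + 2 * ∑' n : ℕ, (-1 : ℝ) ^ (n + 1) * Real.exp (-π * ((n : ℝ) + 1) ^ 2 * x) =
      (2 / Real.sqrt x) * ∑' n : ℕ, Real.exp (-π * ((n : ℝ) + 1 / 2) ^ 2 / x) := by
  have hx0 : (0 : ℝ) < x := hx
  set f : ℤ → ℝ := fun n => (-1 : ℝ) ^ n * Real.exp (-π * x * (n : ℝ) ^ 2) with hf
  set g : ℤ → ℝ := fun n => Real.exp (-π / x * ((n : ℝ) - 1 / 2) ^ 2) with hg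
  -- complex transformation
  have key := Complex.tsum_exp_neg_quadratic (a := (x : ℂ)) (by simpa using hx) (Complex.I / 2)
  have hL : (∑' n : ℤ, Complex.exp (-π * x * (n : ℂ) ^ 2 + 2 * π * (Complex.I / 2) * n))
      = ((∑' n : ℤ, f n : ℝ) : ℂ) := by
    rw [Complex.ofReal_tsum]
    congr 1; funext n
    have h1 : (-(π:ℂ) * x * (n : ℂ) ^ 2 + 2 * π * (Complex.I / 2) * n)
        = (-(π:ℂ) * x * (n : ℂ) ^ 2) + (n : ℂ) * (π * Complex.I) := by ring
    rw [h1, Complex.exp_add, Complex.exp_int_mul, Complex.exp_pi_mul_I, hf]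
    push_cast
    ring
  have hR : (∑' n : ℤ, Complex.exp (-π / x * ((n : ℂ) + Complex.I * (Complex.I / 2)) ^ 2))
      = ((∑' n : ℤ, g n : ℝ) : ℂ) := by
    rw [Complex.ofReal_tsum]
    congr 1; funext n
    have h1 : ((n : ℂ) + Complex.I * (Complex.I / 2)) ^ 2 = ((n : ℂ) - 1 / 2) ^ 2 := by
      rw [← mul_div_assoc, Complex.I_mul_I]; ring
    rw [h1, hg]
    push_cast
    ring_nf
  have hpow : (1 : ℂ) / (x : ℂ) ^ (1 / 2 : ℂ) = ((1 / Real.sqrt x : ℝ) : ℂ) := by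
    rw [Real.sqrt_eq_rpow]
    push_cast [Complex.ofReal_cpow hx.le]
    norm_num
  rw [hL, hR, hpow, ← Complex.ofReal_mul] at key
  have keyR : (∑' n : ℤ, f n) = (1 / Real.sqrt x) * ∑' n : ℤ, g n :=
    Complex.ofReal_inj.mp key
  -- summability facts
  have hsf : Summable fun n : ℕ => Real.exp (-(π * x) * ((n : ℝ) + 1) ^ 2) :=
    aux_summable (by positivity) (by norm_num)
  have hst : Summable fun n : ℕ => Real.exp (-π * ((n : ℝ) + 1 / 2) ^ 2 / x) := by
    refine (aux_summable (c := π / x) (by positivity) (a := 1 / 2) (by norm_num)).congr fun n => ?_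
    congr 1; field_simp
  have hterm : ∀ n : ℕ, f ((n : ℤ) + 1)
      = (-1 : ℝ) ^ (n + 1) * Real.exp (-π * ((n : ℝ) + 1) ^ 2 * x) := by
    intro n
    simp only [hf]
    have h1 : ((-1 : ℝ)) ^ ((n : ℤ) + 1) = (-1 : ℝ) ^ (n + 1) := by
      rw [show ((n : ℤ) + 1) = ((n + 1 : ℕ) : ℤ) by push_cast; ring, zpow_natCast]
    rw [h1]
    congr 1
    push_cast
    ring
  have hsf1 : Summable fun n : ℕ => f ((n : ℤ) + 1) := by
    refine hsf.of_norm_bounded fun n => ?_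
    rw [hterm n, norm_mul, norm_pow, norm_neg, norm_one, one_pow, one_mul,
      Real.norm_of_nonneg (Real.exp_pos _).le]
    exact le_of_eq (by congr 1; ring)
  have hfsymm : ∀ n : ℕ, f (-((n : ℤ) + 1)) = f ((n : ℤ) + 1) := by
    intro n
    simp only [hf, Int.cast_neg, neg_sq]
    congr 1
    rw [← inv_zpow']
    norm_num
  have hsf2 : Summable fun n : ℕ => f (-((n : ℤ) + 1)) := hsf1.congr fun n => (hfsymm n).symm
  -- split f sum
  have hFsplit : (∑' n : ℤ, f n) =
      1 + 2 * ∑' n : ℕ, (-1 : ℝ) ^ (n + 1) * Real.exp (-π * ((n : ℝ) + 1) ^ 2 * x) := by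
    rw [tsum_of_add_one_of_neg_add_one hsf1 hsf2]
    have hf0 : f 0 = 1 := by simp [hf]
    have e1 : (∑' n : ℕ, f ((n : ℤ) + 1))
        = ∑' n : ℕ, (-1 : ℝ) ^ (n + 1) * Real.exp (-π * ((n : ℝ) + 1) ^ 2 * x) :=
      tsum_congr hterm
    have e2 : (∑' n : ℕ, f (-((n : ℤ) + 1)))
        = ∑' n : ℕ, (-1 : ℝ) ^ (n + 1) * Real.exp (-π * ((n : ℝ) + 1) ^ 2 * x) := by
      rw [tsum_congr hfsymm, e1]
    rw [e1, e2, hf0]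
    ring
  -- split g sum
  have hg1 : ∀ n : ℕ, g ((n : ℤ) + 1) = Real.exp (-π * ((n : ℝ) + 1 / 2) ^ 2 / x) := by
    intro n
    simp only [hg]
    congr 1
    push_cast
    field_simp
    ring
  have hg2 : ∀ n : ℕ, g (-((n : ℤ) + 1)) = Real.exp (-π * (((n : ℝ) + 1) + 1 / 2) ^ 2 / x) := by
    intro n
    simp only [hg]
    congr 1
    push_cast
    field_simp
    ring
  have hsg1 : Summable fun n : ℕ => g ((n : ℤ) + 1) := hst.congr fun n => (hg1 n).symm
  have hsg2 : Summable fun n : ℕ => g (-((n : ℤ) + 1)) :=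
    ((summable_nat_add_iff 1).2 hst).congr fun n => by
      rw [hg2 n]; congr 1; push_cast; ring
  have hGsplit : (∑' n : ℤ, g n) = 2 * ∑' n : ℕ, Real.exp (-π * ((n : ℝ) + 1 / 2) ^ 2 / x) := by
    rw [tsum_of_add_one_of_neg_add_one hsg1 hsg2]
    have hg0 : g 0 = Real.exp (-π * ((0 : ℝ) + 1 / 2) ^ 2 / x) := by
      simp only [hg]
      congr 1
      push_cast
      ring
    have e1 : (∑' n : ℕ, g ((n : ℤ) + 1))
        = ∑' n : ℕ, Real.exp (-π * ((n : ℝ) + 1 / 2) ^ 2 / x) := tsum_congr hg1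
    have e2 : (∑' n : ℕ, g (-((n : ℤ) + 1)))
        = ∑' n : ℕ, Real.exp (-π * (((n : ℝ) + 1) + 1 / 2) ^ 2 / x) := tsum_congr hg2
    have e3 : (∑' n : ℕ, Real.exp (-π * ((n : ℝ) + 1 / 2) ^ 2 / x))
        = Real.exp (-π * ((0 : ℝ) + 1 / 2) ^ 2 / x)
          + ∑' n : ℕ, Real.exp (-π * (((n : ℝ) + 1) + 1 / 2) ^ 2 / x) := by
      rw [Summable.tsum_eq_zero_add hst]
      congr 1
      · norm_num
      · exact tsum_congr fun n => by congr 1; push_cast; ring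
    rw [e1, e2, hg0, e3]
    ring
  rw [← hFsplit, keyR, hGsplit]
  ring
end

section
/- For x > 0, the function φ(x) = 1 + 2∑_{n=1}^∞ (-1)^n e^{-π n² x} equals the infinite product ∏_{n=1}^∞ (1 - e^{-π n x})(1 - e^{-π(2n-1)x}). -/
open Real Finset Filter Topology

noncomputable section

namespace JTP

variable {r q : ℝ}




/-- partial product `∏_{i<m} (1 - r^{i+1})` -/
def Dp (r : ℝ) (m : ℕ) : ℝ := ∏ i ∈ Finset.range m, (1 - r ^ (i + 1))

/-- Gaussian binomial `binom (j+k) k` with base `r`, as ratio of partial products. -/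
def gb (r : ℝ) (j k : ℕ) : ℝ := Dp r (j + k) / (Dp r j * Dp r k)


lemma Dp_pos (hr0 : 0 ≤ r) (hr1 : r < 1) (m : ℕ) : 0 < Dp r m := by
  apply Finset.prod_pos
  intro i _
  have : r ^ (i + 1) < 1 := pow_lt_one₀ hr0 hr1 (Nat.succ_ne_zero i)
  linarith

lemma Dp_ne_zero (hr0 : 0 ≤ r) (hr1 : r < 1) (m : ℕ) : Dp r m ≠ 0 :=
  (Dp_pos hr0 hr1 m).ne'

lemma Dp_succ (m : ℕ) : Dp r (m + 1) = Dp r m * (1 - r ^ (m + 1)) :=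
  Finset.prod_range_succ _ _

lemma Dp_le_one (hr0 : 0 ≤ r) (hr1 : r < 1) (m : ℕ) : Dp r m ≤ 1 := by
  apply Finset.prod_le_one
  · intro i _
    have : r ^ (i + 1) < 1 := pow_lt_one₀ hr0 hr1 (Nat.succ_ne_zero i)
    linarith
  · intro i _
    nlinarith [pow_nonneg hr0 (i + 1)]

lemma Dp_antitone (hr0 : 0 ≤ r) (hr1 : r < 1) : Antitone (Dp r) := by
  apply antitone_nat_of_succ_le
  intro m
  rw [Dp_succ]
  have h1 : 0 < Dp r m := Dp_pos hr0 hr1 m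
  nlinarith [pow_nonneg hr0 (m + 1)]

lemma Dp_add (j k : ℕ) :
    Dp r (j + k) = Dp r j * ∏ i ∈ Finset.range k, (1 - r ^ (j + i + 1)) := by
  rw [Dp, Finset.prod_range_add]
  congr 1

lemma gb_symm (j k : ℕ) : gb r j k = gb r k j := by
  rw [gb, gb, add_comm, mul_comm]

lemma gb_zero_left (hr0 : 0 ≤ r) (hr1 : r < 1) (k : ℕ) : gb r 0 k = 1 := by
  rw [gb]
  have : Dp r 0 = 1 := by simp [Dp]
  rw [zero_add, this, one_mul, div_self (Dp_ne_zero hr0 hr1 k)]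

lemma gb_zero_right (hr0 : 0 ≤ r) (hr1 : r < 1) (j : ℕ) : gb r j 0 = 1 := by
  rw [gb_symm, gb_zero_left hr0 hr1]

lemma gb_pascal (hr0 : 0 ≤ r) (hr1 : r < 1) (j k : ℕ) :
    gb r (j + 1) (k + 1) = gb r j (k + 1) + r ^ (j + 1) * gb r (j + 1) k := by
  have hDj := Dp_ne_zero hr0 hr1 (j + 1)
  have hDk := Dp_ne_zero hr0 hr1 (k + 1)
  have hDj' := Dp_ne_zero hr0 hr1 j
  have hDk' := Dp_ne_zero hr0 hr1 k
  have hN : ∀ a b : ℕ, Dp r (a + b) = Dp r a * ∏ i ∈ Finset.range b, (1 - r ^ (a + i + 1)) :=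
    Dp_add
  set N := ∏ i ∈ Finset.range k, (1 - r ^ (j + 1 + i + 1)) with hNdef
  have h1 : Dp r (j + 1 + (k + 1)) = Dp r (j + 1) * (N * (1 - r ^ (j + 1 + k + 1))) := by
    rw [hN (j+1) (k+1), Finset.prod_range_succ]
  have h2 : Dp r (j + (k + 1)) = Dp r j * ((1 - r ^ (j + 1)) * N) := by
    rw [hN j (k+1)]
    congr 1
    have e0 : ∏ i ∈ Finset.range (k+1), (1 - r ^ (j + i + 1))
        = (∏ i ∈ Finset.range k, (1 - r ^ (j + (i+1) + 1))) * (1 - r ^ (j + 0 + 1)) :=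
      Finset.prod_range_succ' _ _
    rw [e0, mul_comm]
    congr 1
    · apply Finset.prod_congr rfl
      intro i _
      have : j + (i + 1) + 1 = j + 1 + i + 1 := by omega
      rw [this]
  have h3 : Dp r (j + 1 + k) = Dp r (j + 1) * N := hN (j+1) k
  rw [gb, gb, gb, h1, h2, h3, Dp_succ, Dp_succ]
  have hrk : (1 : ℝ) - r ^ (k + 1) ≠ 0 := by
    have : r ^ (k + 1) < 1 := pow_lt_one₀ hr0 hr1 (Nat.succ_ne_zero k)
    intro h; linarith [sub_eq_zero.mp h]
  have hrj : (1 : ℝ) - r ^ (j + 1) ≠ 0 := by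
    have : r ^ (j + 1) < 1 := pow_lt_one₀ hr0 hr1 (Nat.succ_ne_zero j)
    intro h; linarith [sub_eq_zero.mp h]
  have hexp : r ^ (j + 1 + k + 1) = r ^ (j + 1) * r ^ (k + 1) := by
    rw [← pow_add]
    have : j + 1 + k + 1 = j + 1 + (k + 1) := by omega
    rw [this]
  rw [hexp]
  field_simp
  ring


lemma cauchy {q : ℝ} (hq0 : 0 ≤ q) (hq1 : q < 1) (m : ℕ) (a b : ℝ) :
    ∏ j ∈ Finset.range m, (a + b * q ^ (2 * j + 1)) =
      ∑ k ∈ Finset.range (m + 1),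
        gb (q ^ 2) (m - k) k * q ^ (k ^ 2) * a ^ (m - k) * b ^ k := by
  have hr0 : (0 : ℝ) ≤ q ^ 2 := sq_nonneg q
  have hr1 : q ^ 2 < 1 := by nlinarith
  induction m with
  | zero => simp [gb_zero_right hr0 hr1]
  | succ m ih =>
    rw [Finset.prod_range_succ, ih]
    set F : ℕ → ℝ := fun k => gb (q ^ 2) (m + 1 - k) k * q ^ (k ^ 2) * a ^ (m + 1 - k) * b ^ k
      with hF
    set G : ℕ → ℝ := fun k => gb (q ^ 2) (m - k) k * q ^ (k ^ 2) * a ^ (m - k) * b ^ k with hG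
    symm
    show (∑ k ∈ Finset.range (m + 1 + 1), F k) = (∑ k ∈ Finset.range (m + 1), G k) * (a + b * q ^ (2 * m + 1))
    rw [Finset.sum_range_succ' F, Finset.sum_range_succ (fun k => F (k + 1)) m, mul_add,
      Finset.sum_mul, Finset.sum_mul, Finset.sum_range_succ' (fun k => G k * a) m,
      Finset.sum_range_succ (fun k => G k * (b * q ^ (2 * m + 1))) m]
    have h0 : F 0 = G 0 * a := by
      simp only [hF, hG, Nat.sub_zero, pow_zero, mul_one, gb_zero_right hr0 hr1]
      rw [pow_succ]; ring
    have htop : F (m + 1) = G m * (b * q ^ (2 * m + 1)) := by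
      have e : (m + 1) ^ 2 = m ^ 2 + (2 * m + 1) := by ring
      simp only [hF, hG, Nat.sub_self, Nat.add_sub_cancel, gb_zero_left hr0 hr1, e, pow_add,
        pow_zero, mul_one, one_mul]
      ring
    have hmid : ∀ k ∈ Finset.range m, F (k + 1) = G (k + 1) * a + G k * (b * q ^ (2 * m + 1)) := by
      intro k hk
      rw [Finset.mem_range] at hk
      obtain ⟨d, rfl⟩ : ∃ d, m = k + d + 1 := ⟨m - k - 1, by omega⟩
      have e1 : k + d + 1 + 1 - (k + 1) = d + 1 := by omega
      have e2 : k + d + 1 - (k + 1) = d := by omega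
      have e3 : k + d + 1 - k = d + 1 := by omega
      simp only [hF, hG, e1, e2, e3]
      rw [gb_pascal hr0 hr1 d k]
      have e4 : (k + 1) ^ 2 = k ^ 2 + (2 * k + 1) := by ring
      have e5 : 2 * (k + d + 1) + 1 = 2 * (d + 1) + (2 * k + 1) := by omega
      rw [e4, e5, pow_add, pow_add, ← pow_mul]
      ring
    rw [Finset.sum_congr rfl hmid, h0, htop, Finset.sum_add_distrib]
    ring

lemma sum_odds (n : ℕ) : ∑ j ∈ Finset.range n, (2 * j + 1) = n ^ 2 := by
  induction n with
  | zero => simp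
  | succ n ih => rw [Finset.sum_range_succ, ih]; ring

lemma prodEval (n : ℕ) :
    ∏ j ∈ Finset.range (2 * n), (q ^ (2 * n) + (-1) * q ^ (2 * j + 1)) =
      (-1) ^ n * q ^ (3 * n ^ 2) * (∏ i ∈ Finset.range n, (1 - q ^ (2 * i + 1))) ^ 2 := by
  have h2n : 2 * n = n + n := by omega
  rw [h2n, Finset.prod_range_add]
  have h1 : ∀ j ∈ Finset.range n,
      q ^ (n + n) + (-1) * q ^ (2 * j + 1)
        = (-1) * q ^ (2 * j + 1) * (1 - q ^ (2 * (n - 1 - j) + 1)) := by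
    intro j hj
    rw [Finset.mem_range] at hj
    have e : n + n = (2 * j + 1) + (2 * (n - 1 - j) + 1) := by omega
    rw [e, pow_add]; ring
  have h2 : ∀ j ∈ Finset.range n,
      q ^ (n + n) + (-1) * q ^ (2 * (n + j) + 1) = q ^ (n + n) * (1 - q ^ (2 * j + 1)) := by
    intro j _
    have e : 2 * (n + j) + 1 = (n + n) + (2 * j + 1) := by omega
    rw [e, pow_add]; ring
  rw [Finset.prod_congr rfl h1, Finset.prod_congr rfl h2]
  rw [Finset.prod_mul_distrib, Finset.prod_mul_distrib, Finset.prod_range_reflect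
    (fun j => 1 - q ^ (2 * j + 1)) n]
  rw [Finset.prod_const, Finset.prod_mul_distrib, Finset.prod_const]
  rw [Finset.prod_pow_eq_pow_sum, sum_odds]
  simp only [Finset.card_range]
  rw [show 3 * n ^ 2 = n ^ 2 + (n + n) * n from by ring, pow_add]
  ring

lemma sumEval (n : ℕ) :
    ∑ k ∈ Finset.range (2 * n + 1),
        gb (q ^ 2) (2 * n - k) k * q ^ (k ^ 2) * (q ^ (2 * n)) ^ (2 * n - k) * (-1) ^ k =
      (-1) ^ n * q ^ (3 * n ^ 2) *
        (gb (q ^ 2) n n +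
          ∑ j ∈ Finset.range n,
            (-1 : ℝ) ^ (j + 1) * 2 * gb (q ^ 2) (n - (j + 1)) (n + (j + 1)) * q ^ ((j + 1) ^ 2)) := by
  set H : ℕ → ℝ :=
    fun k => gb (q ^ 2) (2 * n - k) k * q ^ (k ^ 2) * (q ^ (2 * n)) ^ (2 * n - k) * (-1) ^ k
    with hH
  have hsplit : 2 * n + 1 = n + (n + 1) := by omega
  rw [hsplit]
  rw [Finset.sum_range_add]
  rw [Finset.sum_range_succ' (fun k => H (n + k)) n]
  have hrefl : ∑ x ∈ Finset.range n, H x = ∑ j ∈ Finset.range n, H (n - 1 - j) :=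
    (Finset.sum_range_reflect H n).symm
  rw [hrefl]
  have hHn : H n = (-1) ^ n * q ^ (3 * n ^ 2) * gb (q ^ 2) n n := by
    simp only [hH]
    have e1 : 2 * n - n = n := by omega
    rw [e1, ← pow_mul, show 3 * n ^ 2 = n ^ 2 + 2 * n * n from by ring, pow_add]
    ring
  have hpair : ∀ j ∈ Finset.range n,
      H (n - 1 - j) + H (n + (j + 1)) =
        (-1) ^ n * q ^ (3 * n ^ 2) *
          ((-1 : ℝ) ^ (j + 1) * 2 * gb (q ^ 2) (n - (j + 1)) (n + (j + 1)) * q ^ ((j + 1) ^ 2)) := by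
    intro j hj
    rw [Finset.mem_range] at hj
    obtain ⟨d, rfl⟩ : ∃ d, n = j + 1 + d := ⟨n - (j + 1), by omega⟩
    have e1 : j + 1 + d - 1 - j = d := by omega
    have e3 : 2 * (j + 1 + d) - d = 2 * (j + 1) + d := by omega
    have e4 : 2 * (j + 1 + d) - (j + 1 + d + (j + 1)) = d := by omega
    have e5 : j + 1 + d - (j + 1) = d := by omega
    simp only [hH, e1, e3, e4, e5]
    -- exponents
    have q1 : q ^ (d ^ 2) * (q ^ (2 * (j + 1 + d))) ^ (2 * (j + 1) + d)
        = q ^ (3 * (j + 1 + d) ^ 2 + (j + 1) ^ 2) := by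
      rw [← pow_mul, ← pow_add]
      congr 1
      ring
    have q2 : q ^ ((j + 1 + d + (j + 1)) ^ 2) * (q ^ (2 * (j + 1 + d))) ^ d
        = q ^ (3 * (j + 1 + d) ^ 2 + (j + 1) ^ 2) := by
      rw [← pow_mul, ← pow_add]
      congr 1
      ring
    have s1 : ((-1 : ℝ)) ^ d = (-1 : ℝ) ^ (j + 1 + d) * (-1) ^ (j + 1) := by
      rw [← pow_add]
      have e : j + 1 + d + (j + 1) = d + 2 * (j + 1) := by omega
      rw [e, pow_add, pow_mul]
      norm_num
    have s2 : ((-1 : ℝ)) ^ (j + 1 + d + (j + 1)) = (-1 : ℝ) ^ (j + 1 + d) * (-1) ^ (j + 1) :=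
      pow_add _ _ _
    have hsymm : gb (q ^ 2) (2 * (j + 1) + d) d = gb (q ^ 2) d (2 * (j + 1) + d) := gb_symm _ _
    have earg : j + 1 + d + (j + 1) = 2 * (j + 1) + d := by omega
    rw [hsymm, earg]
    have e6 : 3 * (j + 1 + d) ^ 2 + (j + 1) ^ 2
        = 3 * (j + 1 + d) ^ 2 + (j + 1) ^ 2 := rfl
    calc gb (q ^ 2) d (2 * (j + 1) + d) * q ^ (d ^ 2) * (q ^ (2 * (j + 1 + d))) ^ (2 * (j + 1) + d) * (-1) ^ d
          + gb (q ^ 2) d (2 * (j + 1) + d) * q ^ ((2 * (j + 1) + d) ^ 2) * (q ^ (2 * (j + 1 + d))) ^ d * (-1) ^ (2 * (j + 1) + d)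
        = gb (q ^ 2) d (2 * (j + 1) + d) * ((-1 : ℝ) ^ (j + 1 + d) * (-1) ^ (j + 1))
            * (q ^ (d ^ 2) * (q ^ (2 * (j + 1 + d))) ^ (2 * (j + 1) + d)
               + q ^ ((2 * (j + 1) + d) ^ 2) * (q ^ (2 * (j + 1 + d))) ^ d) := by
          have s3 : ((-1 : ℝ)) ^ (2 * (j + 1) + d) = (-1 : ℝ) ^ (j + 1 + d) * (-1) ^ (j + 1) := by
            rw [← s1]
            have e : 2 * (j + 1) + d = d + 2 * (j + 1) := by omega
            rw [e, pow_add, pow_mul]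
            norm_num
          rw [s1, s3]; ring
      _ = (-1) ^ (j + 1 + d) * q ^ (3 * (j + 1 + d) ^ 2) *
          ((-1 : ℝ) ^ (j + 1) * 2 * gb (q ^ 2) d (2 * (j + 1) + d) * q ^ ((j + 1) ^ 2)) := by
          have q2' : q ^ ((2 * (j + 1) + d) ^ 2) * (q ^ (2 * (j + 1 + d))) ^ d
              = q ^ (3 * (j + 1 + d) ^ 2 + (j + 1) ^ 2) := by
            rw [← pow_mul, ← pow_add]; congr 1; ring
          rw [q1, q2', pow_add]; ring
  have hn0 : H (n + 0) = H n := by norm_num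
  rw [hn0, ← add_assoc, ← Finset.sum_add_distrib, Finset.sum_congr rfl hpair, hHn,
    ← Finset.mul_sum]
  ring
lemma hasProd_aux (hq0 : 0 < q) (hq1 : q < 1) (e : ℕ → ℕ) (he : ∀ n, n + 1 ≤ e n) :
    HasProd (fun n => 1 - q ^ e n) (∏' n, (1 - q ^ e n)) ∧ 0 < ∏' n, (1 - q ^ e n) := by
  have hlt : ∀ n, q ^ e n < 1 := fun n =>
    pow_lt_one₀ hq0.le hq1 (by have := he n; omega)
  have hnn : ∀ n, (0:ℝ) ≤ q ^ e n := fun n => pow_nonneg hq0.le _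
  have hpos : ∀ n, (0:ℝ) < 1 - q ^ e n := fun n => by linarith [hlt n]
  have hlog : Summable (fun n => Real.log (1 - q ^ e n)) := by
    apply Summable.of_norm_bounded
      ((summable_geometric_of_lt_one hq0.le hq1).mul_left (q / (1 - q)))
    intro n
    have h1 : q ^ e n ≤ q ^ (n + 1) := pow_le_pow_of_le_one hq0.le hq1.le (he n)
    have h2 : q ^ (n + 1) ≤ q := by
      calc q ^ (n + 1) ≤ q ^ 1 := pow_le_pow_of_le_one hq0.le hq1.le (by omega)
        _ = q := pow_one q
    have hlogle : Real.log (1 - q ^ e n) ≤ 0 :=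
      Real.log_nonpos (by linarith [hpos n]) (by linarith [hnn n])
    have hlb : -Real.log (1 - q ^ e n) ≤ q ^ e n / (1 - q ^ e n) := by
      rw [← Real.log_inv]
      have := Real.log_le_sub_one_of_pos (x := (1 - q ^ e n)⁻¹) (inv_pos.mpr (hpos n))
      have he2 : (1 - q ^ e n)⁻¹ - 1 = q ^ e n / (1 - q ^ e n) := by
        rw [eq_div_iff (hpos n).ne', sub_mul, inv_mul_cancel₀ (hpos n).ne']
        ring
      linarith [he2 ▸ this]
    have hq1e : 1 - q ≤ 1 - q ^ e n := by linarith
    have hfrac : q ^ e n / (1 - q ^ e n) ≤ q ^ (n + 1) / (1 - q) := by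
      apply div_le_div₀ (by positivity) (le_trans h1 (le_refl _)) (by linarith) hq1e
    rw [Real.norm_eq_abs, abs_of_nonpos hlogle]
    calc -Real.log (1 - q ^ e n) ≤ q ^ e n / (1 - q ^ e n) := hlb
      _ ≤ q ^ (n + 1) / (1 - q) := hfrac
      _ = q / (1 - q) * q ^ n := by rw [pow_succ]; ring
  have hhp : HasProd (fun n => 1 - q ^ e n)
      (Real.exp (∑' n, Real.log (1 - q ^ e n))) := by
    have h := hlog.hasSum.rexp
    rwa [show rexp ∘ (fun n => Real.log (1 - q ^ e n)) = (fun n => 1 - q ^ e n) from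
      funext fun n => by simp [Function.comp, Real.exp_log (hpos n)]] at h
  refine ⟨hhp.tprod_eq ▸ hhp, hhp.tprod_eq ▸ Real.exp_pos _⟩

lemma finite_main (hq0 : 0 < q) (hq1 : q < 1) (n : ℕ) :
    (∏ i ∈ Finset.range n, (1 - q ^ (2 * i + 1))) ^ 2 =
      gb (q ^ 2) n n + ∑ j ∈ Finset.range n,
        (-1 : ℝ) ^ (j + 1) * 2 * gb (q ^ 2) (n - (j + 1)) (n + (j + 1)) * q ^ ((j + 1) ^ 2) := by
  have hC := cauchy hq0.le hq1 (2 * n) (q ^ (2 * n)) (-1)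
  rw [prodEval, sumEval] at hC
  have hne : ((-1 : ℝ)) ^ n * q ^ (3 * n ^ 2) ≠ 0 :=
    mul_ne_zero (pow_ne_zero _ (by norm_num)) (pow_ne_zero _ hq0.ne')
  exact mul_left_cancel₀ hne hC

theorem key (hq0 : 0 < q) (hq1 : q < 1) :
    1 + 2 * ∑' n : ℕ, (-1 : ℝ) ^ (n + 1) * q ^ ((n + 1) ^ 2) =
      ∏' n : ℕ, (1 - q ^ (n + 1)) * (1 - q ^ (2 * n + 1)) := by
  have hr0 : (0 : ℝ) ≤ q ^ 2 := sq_nonneg q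
  have hr1 : q ^ 2 < 1 := by nlinarith
  have hDfull : HasProd (fun n : ℕ => 1 - q ^ (2 * n + 2)) (∏' n : ℕ, (1 - q ^ (2 * n + 2))) ∧
      0 < ∏' n : ℕ, (1 - q ^ (2 * n + 2)) :=
    hasProd_aux hq0 hq1 (fun n => 2 * n + 2) (fun n => (by omega : n + 1 ≤ 2 * n + 2))
  have hTfull : HasProd (fun n : ℕ => 1 - q ^ (2 * n + 1)) (∏' n : ℕ, (1 - q ^ (2 * n + 1))) ∧
      0 < ∏' n : ℕ, (1 - q ^ (2 * n + 1)) :=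
    hasProd_aux hq0 hq1 (fun n => 2 * n + 1) (fun n => (by omega : n + 1 ≤ 2 * n + 1))
  have hAfull : HasProd (fun n : ℕ => 1 - q ^ (n + 1)) (∏' n : ℕ, (1 - q ^ (n + 1))) ∧
      0 < ∏' n : ℕ, (1 - q ^ (n + 1)) :=
    hasProd_aux hq0 hq1 (fun n => n + 1) (fun n => (by omega : n + 1 ≤ n + 1))
  obtain ⟨hD, hDpos⟩ := hDfull
  obtain ⟨hT, hTpos⟩ := hTfull
  obtain ⟨hA, hApos⟩ := hAfull
  set Dinf := ∏' n : ℕ, (1 - q ^ (2 * n + 2)) with hDinfdef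
  set Tinf := ∏' n : ℕ, (1 - q ^ (2 * n + 1)) with hTinfdef
  set Ainf := ∏' n : ℕ, (1 - q ^ (n + 1)) with hAinfdef
  have hDinv_pos : 0 < Dinf⁻¹ := inv_pos.mpr hDpos
  -- `Dp (q^2)` equals partial products of the even factors
  have hDp : ∀ m, Dp (q ^ 2) m = ∏ i ∈ Finset.range m, (1 - q ^ (2 * i + 2)) := by
    intro m
    apply Finset.prod_congr rfl
    intro i _
    have h : ((q : ℝ) ^ 2) ^ (i + 1) = q ^ (2 * i + 2) := by
      rw [← pow_mul, Nat.mul_succ]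
    rw [h]
  have hDten : Tendsto (fun m => Dp (q ^ 2) m) atTop (𝓝 Dinf) :=
    Tendsto.congr (fun m => (hDp m).symm) hD.tendsto_prod_nat
  have hTten : Tendsto (fun m => ∏ i ∈ Finset.range m, (1 - q ^ (2 * i + 1))) atTop (𝓝 Tinf) :=
    hT.tendsto_prod_nat
  have hAten : Tendsto (fun m => ∏ i ∈ Finset.range m, (1 - q ^ (i + 1))) atTop (𝓝 Ainf) :=
    hA.tendsto_prod_nat
  have hDplow : ∀ m, Dinf ≤ Dp (q ^ 2) m := by
    intro m
    apply le_of_tendsto hDten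
    filter_upwards [eventually_ge_atTop m] with k hk
    exact Dp_antitone hr0 hr1 hk
  have hgb_nonneg : ∀ j k, 0 ≤ gb (q ^ 2) j k := fun j k =>
    le_of_lt (div_pos (Dp_pos hr0 hr1 _) (mul_pos (Dp_pos hr0 hr1 _) (Dp_pos hr0 hr1 _)))
  have hgb_le : ∀ j k, gb (q ^ 2) j k ≤ Dinf⁻¹ := by
    intro j k
    rw [gb]
    have h1 : Dp (q ^ 2) (j + k) ≤ Dp (q ^ 2) j := Dp_antitone hr0 hr1 (by omega)
    have hdj := Dp_pos hr0 hr1 j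
    have hdk := Dp_pos hr0 hr1 k
    calc Dp (q ^ 2) (j + k) / (Dp (q ^ 2) j * Dp (q ^ 2) k)
        ≤ Dp (q ^ 2) j / (Dp (q ^ 2) j * Dp (q ^ 2) k) :=
          by gcongr
      _ = (Dp (q ^ 2) k)⁻¹ := by field_simp
      _ ≤ Dinf⁻¹ := inv_anti₀ hDpos (hDplow k)
  set f : ℕ → ℕ → ℝ := fun n j =>
    if j = 0 then gb (q ^ 2) n n
    else if j ≤ n then (-1 : ℝ) ^ j * 2 * gb (q ^ 2) (n - j) (n + j) * q ^ (j ^ 2) else 0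
    with hfdef
  set g : ℕ → ℝ := fun j =>
    if j = 0 then Dinf⁻¹ else (-1 : ℝ) ^ j * 2 * q ^ (j ^ 2) * Dinf⁻¹ with hgdef
  have hPn : ∀ n, (∏ i ∈ Finset.range n, (1 - q ^ (2 * i + 1))) ^ 2 = ∑' j, f n j := by
    intro n
    rw [tsum_eq_sum (s := Finset.range (n + 1))
      (by
        intro j hj
        rw [Finset.mem_range, not_lt] at hj
        simp only [hfdef]
        rw [if_neg (by omega), if_neg (by omega)])]
    rw [Finset.sum_range_succ' (f n) n, finite_main hq0 hq1 n, add_comm]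
    congr 1
    · apply Finset.sum_congr rfl
      intro j hj
      rw [Finset.mem_range] at hj
      simp only [hfdef]
      rw [if_neg (by omega), if_pos (by omega)]
  have hbound_sum : Summable (fun j : ℕ => 2 * Dinf⁻¹ * q ^ j) :=
    (summable_geometric_of_lt_one hq0.le hq1).mul_left _
  have hqsq : ∀ j : ℕ, q ^ (j ^ 2) ≤ q ^ j := fun j =>
    pow_le_pow_of_le_one hq0.le hq1.le (Nat.le_self_pow two_ne_zero j)
  have hqpow_pos : ∀ m : ℕ, (0:ℝ) < q ^ m := fun m => pow_pos hq0 m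
  have hfb : ∀ n j, ‖f n j‖ ≤ 2 * Dinf⁻¹ * q ^ j := by
    intro n j
    simp only [hfdef]
    rcases eq_or_ne j 0 with rfl | hj0
    · rw [if_pos rfl, Real.norm_eq_abs, abs_of_nonneg (hgb_nonneg n n), pow_zero, mul_one]
      linarith [hgb_le n n, hDinv_pos]
    · rw [if_neg hj0]
      by_cases hjn : j ≤ n
      · rw [if_pos hjn, Real.norm_eq_abs, abs_mul, abs_mul, abs_mul, abs_pow, abs_neg, abs_one,
          one_pow, one_mul, abs_of_nonneg (hgb_nonneg _ _), abs_of_nonneg (hqpow_pos _).le,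
          abs_two]
        have h1 : gb (q ^ 2) (n - j) (n + j) * q ^ (j ^ 2) ≤ Dinf⁻¹ * q ^ j := by
          apply mul_le_mul (hgb_le _ _) (hqsq j) (hqpow_pos _).le hDinv_pos.le
        nlinarith [hqpow_pos (j ^ 2), hgb_nonneg (n - j) (n + j)]
      · rw [if_neg hjn, norm_zero]
        positivity
  have hgb_aux : ∀ j : ℕ, ‖g j‖ ≤ 2 * Dinf⁻¹ * q ^ j := by
    intro j
    simp only [hgdef]
    rcases eq_or_ne j 0 with rfl | hj0
    · rw [if_pos rfl, Real.norm_eq_abs, abs_of_nonneg hDinv_pos.le, pow_zero, mul_one]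
      linarith [hDinv_pos]
    · rw [if_neg hj0, Real.norm_eq_abs, abs_mul, abs_mul, abs_mul, abs_pow, abs_neg, abs_one,
        one_pow, one_mul, abs_of_nonneg (hqpow_pos _).le, abs_of_nonneg hDinv_pos.le, abs_two]
      have := hqsq j
      nlinarith [hqpow_pos j, hDinv_pos]
  have htwon : Tendsto (fun n : ℕ => n + n) atTop atTop :=
    tendsto_atTop_mono (fun n => Nat.le_add_left n n) tendsto_id
  have hDD : Dinf / (Dinf * Dinf) = Dinf⁻¹ := by
    field_simp
  have hflim : ∀ j, Tendsto (fun n => f n j) atTop (𝓝 (g j)) := by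
    intro j
    rcases eq_or_ne j 0 with rfl | hj0
    · have hEq : ∀ n : ℕ, f n 0 = Dp (q ^ 2) (n + n) / (Dp (q ^ 2) n * Dp (q ^ 2) n) := by
        intro n
        simp only [hfdef]
        rw [if_pos trivial, gb]
      have hnum : Tendsto (fun n : ℕ => Dp (q ^ 2) (n + n)) atTop (𝓝 Dinf) :=
        hDten.comp htwon
      have hlim : Tendsto (fun n : ℕ => Dp (q ^ 2) (n + n) / (Dp (q ^ 2) n * Dp (q ^ 2) n))
          atTop (𝓝 (Dinf / (Dinf * Dinf))) :=
        hnum.div (hDten.mul hDten) (by positivity)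
      rw [show g 0 = Dinf / (Dinf * Dinf) from by simp [hgdef, hDD]]
      exact Tendsto.congr (fun n => (hEq n).symm) hlim
    · have hEv : ∀ᶠ n in atTop, ((-1 : ℝ) ^ j * 2 *
          (Dp (q ^ 2) (n + n) / (Dp (q ^ 2) (n - j) * Dp (q ^ 2) (n + j))) * q ^ (j ^ 2)) = f n j := by
        filter_upwards [eventually_ge_atTop j] with n hn
        simp only [hfdef]
        rw [if_neg hj0, if_pos hn, gb]
        have e : n - j + (n + j) = n + n := by omega
        rw [e]
      have hnum : Tendsto (fun n : ℕ => Dp (q ^ 2) (n + n)) atTop (𝓝 Dinf) := hDten.comp htwon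
      have hden1 : Tendsto (fun n : ℕ => Dp (q ^ 2) (n - j)) atTop (𝓝 Dinf) :=
        hDten.comp (tendsto_sub_atTop_nat j)
      have hden2 : Tendsto (fun n : ℕ => Dp (q ^ 2) (n + j)) atTop (𝓝 Dinf) :=
        hDten.comp (tendsto_add_atTop_nat j)
      have hlim : Tendsto (fun n : ℕ => (-1 : ℝ) ^ j * 2 *
          (Dp (q ^ 2) (n + n) / (Dp (q ^ 2) (n - j) * Dp (q ^ 2) (n + j))) * q ^ (j ^ 2))
          atTop (𝓝 ((-1 : ℝ) ^ j * 2 * (Dinf / (Dinf * Dinf)) * q ^ (j ^ 2))) :=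
        (((hnum.div (hden1.mul hden2) (by positivity)).const_mul _).mul_const _)
      rw [show g j = (-1 : ℝ) ^ j * 2 * (Dinf / (Dinf * Dinf)) * q ^ (j ^ 2) from by
        simp only [hgdef, if_neg hj0, hDD]; ring]
      exact Tendsto.congr' hEv hlim
  have hTsumTen : Tendsto (fun n => ∑' j, f n j) atTop (𝓝 (∑' j, g j)) :=
    tendsto_tsum_of_dominated_convergence hbound_sum hflim
      (Eventually.of_forall fun n => hfb n)
  have hPten : Tendsto (fun n => ∑' j, f n j) atTop (𝓝 (Tinf ^ 2)) :=
    Tendsto.congr (fun n => hPn n) (hTten.pow 2)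
  have hkey2 : Tinf ^ 2 = ∑' j, g j := tendsto_nhds_unique hPten hTsumTen
  have hgsum : Summable g := Summable.of_norm_bounded hbound_sum hgb_aux
  have hg0 : ∑' j, g j = Dinf⁻¹ +
      (∑' j : ℕ, (-1 : ℝ) ^ (j + 1) * q ^ ((j + 1) ^ 2)) * (2 * Dinf⁻¹) := by
    have hG0 : g 0 = Dinf⁻¹ := by simp [hgdef]
    rw [Summable.tsum_eq_zero_add hgsum, ← tsum_mul_right, hG0]
    congr 1
    apply tsum_congr
    intro j
    simp only [hgdef]
    rw [if_neg (Nat.succ_ne_zero j)]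
    ring
  have hsplit : ∀ n, (∏ i ∈ Finset.range (2 * n), (1 - q ^ (i + 1)))
      = (∏ i ∈ Finset.range n, (1 - q ^ (2 * i + 2))) *
        ∏ i ∈ Finset.range n, (1 - q ^ (2 * i + 1)) := by
    intro n
    induction n with
    | zero => simp
    | succ n ih =>
      rw [show 2 * (n + 1) = (2 * n + 1) + 1 from by ring, Finset.prod_range_succ,
        Finset.prod_range_succ, ih, Finset.prod_range_succ, Finset.prod_range_succ]
      have e1 : 2 * n + 1 + 1 = 2 * n + 2 := by omega
      rw [e1]
      ring
  have hAeq : Ainf = Dinf * Tinf := by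
    have h2n : Tendsto (fun n : ℕ => 2 * n) atTop atTop :=
      tendsto_atTop_mono (fun n => (by omega : n ≤ 2 * n)) tendsto_id
    have h1 : Tendsto (fun n => ∏ i ∈ Finset.range (2 * n), (1 - q ^ (i + 1))) atTop (𝓝 Ainf) :=
      hAten.comp h2n
    have h1' : Tendsto (fun n => (∏ i ∈ Finset.range n, (1 - q ^ (2 * i + 2))) *
        ∏ i ∈ Finset.range n, (1 - q ^ (2 * i + 1))) atTop (𝓝 Ainf) :=
      Tendsto.congr hsplit h1
    exact tendsto_nhds_unique h1' (hD.tendsto_prod_nat.mul hTten)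
  have hRHS : ∏' n : ℕ, (1 - q ^ (n + 1)) * (1 - q ^ (2 * n + 1)) = Ainf * Tinf :=
    Multipliable.tprod_mul hA.multipliable hT.multipliable
  rw [hRHS, hAeq]
  have hfin : Tinf ^ 2 = Dinf⁻¹ +
      (∑' j : ℕ, (-1 : ℝ) ^ (j + 1) * q ^ ((j + 1) ^ 2)) * (2 * Dinf⁻¹) := hkey2.trans hg0
  have hDne : Dinf ≠ 0 := hDpos.ne'
  have : Dinf * Tinf * Tinf = Dinf * Tinf ^ 2 := by ring
  rw [this, hfin]
  field_simp

end JTP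

open JTP in
/-- For `x > 0`, `φ(x) = 1 + 2∑_{n=1}^∞ (-1)^n e^{-π n² x}` equals the infinite product
`∏_{n=1}^∞ (1 - e^{-π n x})(1 - e^{-π(2n-1)x})`. -/
theorem phi_triple_product (x : ℝ) (hx : 0 < x) :
    1 + 2 * ∑' n : ℕ, (-1 : ℝ) ^ (n + 1) * Real.exp (-π * ((n : ℝ) + 1) ^ 2 * x) =
      ∏' n : ℕ,
        (1 - Real.exp (-π * ((n : ℝ) + 1) * x)) *
          (1 - Real.exp (-π * (2 * ((n : ℝ) + 1) - 1) * x)) := by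
  set q := Real.exp (-π * x) with hqdef
  have hq0 : 0 < q := Real.exp_pos _
  have hq1 : q < 1 := by
    rw [hqdef, Real.exp_lt_one_iff]
    nlinarith [Real.pi_pos]
  have h1 : ∀ n : ℕ, Real.exp (-π * ((n : ℝ) + 1) ^ 2 * x) = q ^ ((n + 1) ^ 2) := by
    intro n
    rw [hqdef, ← Real.exp_nat_mul]
    congr 1
    push_cast
    ring
  have h2 : ∀ n : ℕ, Real.exp (-π * ((n : ℝ) + 1) * x) = q ^ (n + 1) := by
    intro n
    rw [hqdef, ← Real.exp_nat_mul]
    congr 1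
    push_cast
    ring
  have h3 : ∀ n : ℕ, Real.exp (-π * (2 * ((n : ℝ) + 1) - 1) * x) = q ^ (2 * n + 1) := by
    intro n
    rw [hqdef, ← Real.exp_nat_mul]
    congr 1
    push_cast
    ring
  rw [show (∑' n : ℕ, (-1 : ℝ) ^ (n + 1) * Real.exp (-π * ((n : ℝ) + 1) ^ 2 * x))
      = ∑' n : ℕ, (-1 : ℝ) ^ (n + 1) * q ^ ((n + 1) ^ 2) from
    tsum_congr fun n => by rw [h1 n]]
  rw [show (∏' n : ℕ, (1 - Real.exp (-π * ((n : ℝ) + 1) * x)) *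
        (1 - Real.exp (-π * (2 * ((n : ℝ) + 1) - 1) * x)))
      = ∏' n : ℕ, (1 - q ^ (n + 1)) * (1 - q ^ (2 * n + 1)) from
    tprod_congr fun n => by rw [h2 n, h3 n]]
  exact JTP.key hq0 hq1
end
end

section
/- For all x > 0, the derivative of φ(x) = 1 + 2∑_{n=1}^∞ (-1)^n e^{-π n² x} satisfies φ'(x) ≤ 2π e^{-π x}. -/
open Real

set_option maxHeartbeats 2000000

namespace PhiDerivAux


lemma le_sq_of_le {n : ℕ} {b : ℝ} (hb : (n : ℝ) ≤ b) : (n : ℝ) ≤ b ^ 2 := by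
  have h2 : (n : ℝ) ≤ (n : ℝ) ^ 2 := by exact_mod_cast Nat.le_self_pow two_ne_zero n
  have h0 : (0 : ℝ) ≤ (n : ℝ) := Nat.cast_nonneg n
  nlinarith

lemma summable_exp_nsq (b : ℕ → ℝ) (hb : ∀ n : ℕ, (n : ℝ) ≤ b n) {t : ℝ} (ht : 0 < t) :
    Summable fun n : ℕ => Real.exp (-(π * b n ^ 2 * t)) := by
  have hr0 : (0:ℝ) ≤ Real.exp (-(π * t)) := (Real.exp_pos _).le
  have hr1 : Real.exp (-(π * t)) < 1 := by
    rw [Real.exp_lt_one_iff]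
    nlinarith [Real.pi_pos]
  refine Summable.of_nonneg_of_le (fun n => (Real.exp_pos _).le) (fun n => ?_)
    (summable_geometric_of_lt_one hr0 hr1)
  rw [← Real.exp_nat_mul]
  apply Real.exp_le_exp.2
  have h1 : (n : ℝ) * (π * t) ≤ b n ^ 2 * (π * t) :=
    mul_le_mul_of_nonneg_right (le_sq_of_le (hb n)) (by positivity)
  nlinarith

lemma summable_mul_exp_nsq (b : ℕ → ℝ) (hb : ∀ n : ℕ, (n : ℝ) ≤ b n) {t : ℝ} (ht : 0 < t) :
    Summable fun n : ℕ => π * b n ^ 2 * Real.exp (-(π * b n ^ 2 * t)) := by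
  have hr0 : (0:ℝ) ≤ Real.exp (-(π * (t/2))) := (Real.exp_pos _).le
  have hr1 : Real.exp (-(π * (t/2))) < 1 := by
    rw [Real.exp_lt_one_iff]
    nlinarith [Real.pi_pos]
  have key : ∀ n : ℕ, π * b n ^ 2 * Real.exp (-(π * b n ^ 2 * t)) ≤
      (2/t) * Real.exp (-(π * (t/2))) ^ n := by
    intro n
    set w := π * b n ^ 2 with hw
    have hw0 : 0 ≤ w := by
      have := le_sq_of_le (hb n)
      have h0 : (0:ℝ) ≤ (n:ℝ) := Nat.cast_nonneg n
      nlinarith [Real.pi_pos]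
    have h2 : w * (t/2) ≤ Real.exp (w * (t/2)) := by
      linarith [Real.add_one_le_exp (w * (t/2))]
    have h3 : w ≤ (2/t) * Real.exp (w * (t/2)) := by
      have h4 := mul_le_mul_of_nonneg_left h2 (le_of_lt (by positivity : (0:ℝ) < 2/t))
      calc w = (2/t) * (w * (t/2)) := by field_simp
        _ ≤ (2/t) * Real.exp (w * (t/2)) := h4
    have h5 : w * Real.exp (-(w * t)) ≤ (2/t) * Real.exp (-(w * (t/2))) := by
      calc w * Real.exp (-(w * t))
          ≤ ((2/t) * Real.exp (w * (t/2))) * Real.exp (-(w * t)) :=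
            mul_le_mul_of_nonneg_right h3 (Real.exp_pos _).le
        _ = (2/t) * Real.exp (-(w * (t/2))) := by
            rw [mul_assoc, ← Real.exp_add]
            congr 2
            ring
    have h6 : Real.exp (-(w * (t/2))) ≤ Real.exp (-(π * (t/2))) ^ n := by
      rw [← Real.exp_nat_mul]
      apply Real.exp_le_exp.2
      have h1 : (n : ℝ) * (π * (t/2)) ≤ b n ^ 2 * (π * (t/2)) :=
        mul_le_mul_of_nonneg_right (le_sq_of_le (hb n)) (by positivity)
      rw [hw]
      nlinarith
    calc π * b n ^ 2 * Real.exp (-(π * b n ^ 2 * t)) = w * Real.exp (-(w * t)) := rfl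
      _ ≤ (2/t) * Real.exp (-(w * (t/2))) := h5
      _ ≤ (2/t) * Real.exp (-(π * (t/2))) ^ n := by
          apply mul_le_mul_of_nonneg_left h6 (by positivity)
  refine Summable.of_nonneg_of_le (fun n => ?_) key
    ((summable_geometric_of_lt_one hr0 hr1).mul_left _)
  positivity

lemma neg_cast_sq (n : ℕ) : (((-((n:ℤ)+1) : ℤ) : ℝ) + 1/2)^2 = ((n:ℝ) + 1/2)^2 := by
  push_cast
  ring

lemma summable_exp_int {t : ℝ} (ht : 0 < t) :
    Summable fun n : ℤ => Real.exp (-(π * ((n:ℝ) + 1/2)^2 * t)) := by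
  have base := summable_exp_nsq (fun n => (n:ℝ) + 1/2) (fun n => by linarith) ht
  apply Summable.of_nat_of_neg_add_one
  · exact base.congr (fun n => by norm_num)
  · refine base.congr (fun n => ?_)
    have := neg_cast_sq n
    push_cast
    push_cast at this
    rw [this]

lemma summable_mul_exp_int {t : ℝ} (ht : 0 < t) :
    Summable fun n : ℤ => π * ((n:ℝ) + 1/2)^2 * Real.exp (-(π * ((n:ℝ) + 1/2)^2 * t)) := by
  have base := summable_mul_exp_nsq (fun n => (n:ℝ) + 1/2) (fun n => by linarith) ht
  apply Summable.of_nat_of_neg_add_one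
  · exact base.congr (fun n => by norm_num)
  · refine base.congr (fun n => ?_)
    have := neg_cast_sq n
    push_cast
    push_cast at this
    rw [this]

lemma hasDerivAt_tsum_exp {ι : Type*} [Countable ι] (a c : ι → ℝ) (ha : ∀ i, |a i| ≤ 1)
    (hc : ∀ i, 0 ≤ c i)
    (hs1 : ∀ t : ℝ, 0 < t → Summable fun i => c i * Real.exp (-(c i * t)))
    (hs0 : ∀ t : ℝ, 0 < t → Summable fun i => Real.exp (-(c i * t)))
    {x : ℝ} (hx : 0 < x) :
    HasDerivAt (fun t : ℝ => ∑' i, a i * Real.exp (-(c i * t)))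
      (∑' i, -(c i * (a i * Real.exp (-(c i * x))))) x := by
  have hx2 : (0:ℝ) < x/2 := by linarith
  refine hasDerivAt_tsum_of_isPreconnected (hs1 _ hx2) (isOpen_Ioi (a := x/2))
    isPreconnected_Ioi (g' := fun i t => -(c i * (a i * Real.exp (-(c i * t)))))
    (fun i y _ => ?_) (fun i y hy => ?_) (half_lt_self hx)
    (Summable.of_norm_bounded (hs0 x hx) (fun i => ?_)) (half_lt_self hx)
  · have h := (((hasDerivAt_id y).const_mul (c i)).neg.exp).const_mul (a i)
    simp only [id_eq, Pi.neg_apply] at h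
    refine h.congr_deriv ?_
    ring
  · have hy' : x/2 ≤ y := le_of_lt hy
    have hE : Real.exp (-(c i * y)) ≤ Real.exp (-(c i * (x/2))) := by
      apply Real.exp_le_exp.2
      have := mul_le_mul_of_nonneg_left hy' (hc i)
      linarith
    rw [Real.norm_eq_abs, abs_neg, abs_mul, abs_mul, abs_of_nonneg (hc i),
      abs_of_nonneg (Real.exp_pos _).le]
    have h1 : |a i| * Real.exp (-(c i * y)) ≤ 1 * Real.exp (-(c i * (x/2))) :=
      mul_le_mul (ha i) hE (Real.exp_pos _).le zero_le_one
    rw [one_mul] at h1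
    exact mul_le_mul_of_nonneg_left h1 (hc i)
  · rw [Real.norm_eq_abs, abs_mul, abs_of_nonneg (Real.exp_pos _).le]
    calc |a i| * Real.exp (-(c i * x)) ≤ 1 * Real.exp (-(c i * x)) :=
          mul_le_mul_of_nonneg_right (ha i) (Real.exp_pos _).le
      _ = Real.exp (-(c i * x)) := one_mul _



lemma inv_neg_one_pow (k : ℕ) : ((-1:ℝ)^k)⁻¹ = (-1)^k := by
  rcases Nat.even_or_odd k with h | h
  · rw [h.neg_one_pow]; norm_num
  · rw [h.neg_one_pow]; norm_num


lemma poisson {x : ℝ} (hx : 0 < x) :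
    1 + 2 * ∑' n : ℕ, (-1:ℝ)^(n+1) * Real.exp (-(π*((n:ℝ)+1)^2*x))
      = (Real.sqrt x)⁻¹ * ∑' n : ℤ, Real.exp (-(π*((n:ℝ)+1/2)^2*x⁻¹)) := by
  have hxc : (x:ℂ) ≠ 0 := by exact_mod_cast hx.ne'
  have key := Complex.tsum_exp_neg_quadratic (a := (x:ℂ)) (by simpa using hx) (Complex.I / 2)
  have hterm1 : ∀ n : ℤ, Complex.exp (-(π:ℂ) * (x:ℂ) * (n:ℂ)^2 + 2*(π:ℂ)*(Complex.I/2)*(n:ℂ))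
      = (((-1:ℝ)^n * Real.exp (-(π*(n:ℝ)^2*x)) : ℝ) : ℂ) := by
    intro n
    rw [Complex.exp_add]
    have h1 : (-(π:ℂ) * (x:ℂ) * (n:ℂ)^2) = ((-(π*(n:ℝ)^2*x) : ℝ) : ℂ) := by push_cast; ring
    have h2 : (2*(π:ℂ)*(Complex.I/2)*(n:ℂ)) = (n:ℂ) * ((π:ℂ) * Complex.I) := by ring
    rw [h1, h2, Complex.exp_int_mul, Complex.exp_pi_mul_I, ← Complex.ofReal_exp]
    push_cast
    ring
  have hterm2 : ∀ n : ℤ, Complex.exp (-(π:ℂ) / (x:ℂ) * ((n:ℂ) + Complex.I * (Complex.I/2))^2)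
      = ((Real.exp (-(π*((n:ℝ)-1/2)^2*x⁻¹)) : ℝ) : ℂ) := by
    intro n
    have hI : ((n:ℂ) + Complex.I * (Complex.I/2)) = ((n:ℂ) - 1/2) := by
      rw [show Complex.I * (Complex.I/2) = (Complex.I*Complex.I)/2 by ring, Complex.I_mul_I]
      ring
    rw [hI, show (-(π:ℂ)/(x:ℂ) * ((n:ℂ) - 1/2)^2) = ((-(π*((n:ℝ)-1/2)^2*x⁻¹) : ℝ) : ℂ) from by
      push_cast; rw [div_eq_mul_inv]; ring, Complex.ofReal_exp]
  have hsq : (1 : ℂ) / (x:ℂ) ^ (1/2 : ℂ) = (((Real.sqrt x)⁻¹ : ℝ) : ℂ) := by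
    rw [show ((1/2 : ℂ)) = ((1/2 : ℝ) : ℂ) by norm_num, ← Complex.ofReal_cpow hx.le,
      ← Real.sqrt_eq_rpow, one_div, ← Complex.ofReal_inv]
  have keyR : ∑' n:ℤ, ((-1:ℝ)^n * Real.exp (-(π*(n:ℝ)^2*x)))
      = (Real.sqrt x)⁻¹ * ∑' n:ℤ, Real.exp (-(π*((n:ℝ)-1/2)^2*x⁻¹)) := by
    have h1 : ((∑' n:ℤ, ((-1:ℝ)^n * Real.exp (-(π*(n:ℝ)^2*x))) : ℝ) : ℂ)
        = (((Real.sqrt x)⁻¹ * ∑' n:ℤ, Real.exp (-(π*((n:ℝ)-1/2)^2*x⁻¹)) : ℝ) : ℂ) := by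
      rw [Complex.ofReal_tsum, Complex.ofReal_mul, Complex.ofReal_tsum]
      calc ∑' n:ℤ, (((-1:ℝ)^n * Real.exp (-(π*(n:ℝ)^2*x)) : ℝ):ℂ)
          = ∑' n:ℤ, Complex.exp (-(π:ℂ) * (x:ℂ) * (n:ℂ)^2 + 2*(π:ℂ)*(Complex.I/2)*(n:ℂ)) :=
            (tsum_congr hterm1).symm
        _ = 1/(x:ℂ)^(1/2:ℂ)
            * ∑' n:ℤ, Complex.exp (-(π:ℂ)/(x:ℂ) * ((n:ℂ) + Complex.I*(Complex.I/2))^2) := key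
        _ = _ := by rw [hsq, tsum_congr hterm2]
    exact_mod_cast h1
  have hsplitR : ∑' n:ℤ, Real.exp (-(π*((n:ℝ)-1/2)^2*x⁻¹))
      = ∑' n:ℤ, Real.exp (-(π*((n:ℝ)+1/2)^2*x⁻¹)) := by
    calc ∑' n:ℤ, Real.exp (-(π*((n:ℝ)-1/2)^2*x⁻¹))
        = ∑' n:ℤ, (fun m:ℤ => Real.exp (-(π*((m:ℝ)-1/2)^2*x⁻¹))) (n+1) :=
          ((Equiv.addRight (1:ℤ)).tsum_eq _).symm
      _ = ∑' n:ℤ, Real.exp (-(π*((n:ℝ)+1/2)^2*x⁻¹)) := by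
          refine tsum_congr (fun n => ?_)
          simp only
          congr 1
          push_cast
          ring
  have hx' : (0:ℝ) < x := hx
  set L : ℤ → ℝ := fun n => (-1:ℝ)^n * Real.exp (-(π*(n:ℝ)^2*x)) with hL
  have hLnat : ∀ n:ℕ, L (n:ℤ) = (-1:ℝ)^n * Real.exp (-(π*(n:ℝ)^2*x)) := by
    intro n
    simp only [hL, zpow_natCast]
    norm_num
  have hLneg : ∀ n:ℕ, L (-((n:ℤ)+1)) = (-1:ℝ)^(n+1) * Real.exp (-(π*((n:ℝ)+1)^2*x)) := by
    intro n
    simp only [hL]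
    rw [show (-((n:ℤ)+1)) = -(((n+1:ℕ)):ℤ) by push_cast; ring, zpow_neg, zpow_natCast,
      inv_neg_one_pow]
    congr 2
    push_cast
    ring
  have s1 : Summable (fun n:ℕ => L (n:ℤ)) := by
    refine Summable.of_norm_bounded (summable_exp_nsq (fun n => (n:ℝ)) (fun n => le_refl _) hx) ?_
    intro n
    rw [hLnat n, Real.norm_eq_abs, abs_mul, abs_pow, abs_neg, abs_one, one_pow, one_mul,
      abs_of_nonneg (Real.exp_pos _).le]
  have s2 : Summable (fun n:ℕ => L (-((n:ℤ)+1))) := by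
    refine Summable.of_norm_bounded
      (summable_exp_nsq (fun n => (n:ℝ)+1) (fun n => by simp) hx) ?_
    intro n
    rw [hLneg n, Real.norm_eq_abs, abs_mul, abs_pow, abs_neg, abs_one, one_pow, one_mul,
      abs_of_nonneg (Real.exp_pos _).le]
  have hsplitL : ∑' n:ℤ, L n
      = 1 + 2*∑' n:ℕ, ((-1:ℝ)^(n+1) * Real.exp (-(π*((n:ℝ)+1)^2*x))) := by
    rw [tsum_of_nat_of_neg_add_one s1 s2, Summable.tsum_eq_zero_add s1]
    have e0 : L ((0:ℕ):ℤ) = 1 := by rw [hLnat 0]; norm_num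
    have e1 : ∑' n:ℕ, L (((n+1:ℕ)):ℤ) = ∑' n:ℕ, ((-1:ℝ)^(n+1) * Real.exp (-(π*((n:ℝ)+1)^2*x))) := by
      refine tsum_congr (fun n => ?_)
      rw [hLnat (n+1)]
      push_cast
      ring_nf
    have e2 : ∑' n:ℕ, L (-((n:ℤ)+1)) = ∑' n:ℕ, ((-1:ℝ)^(n+1) * Real.exp (-(π*((n:ℝ)+1)^2*x))) :=
      tsum_congr (fun n => hLneg n)
    rw [e0, e1, e2]
    ring
  rw [← hsplitL, keyR, hsplitR]



lemma tsum_nat_half_bound {y : ℝ} (hy : 14 ≤ y) :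
    ∑' n:ℕ, π*((n:ℝ)+1/2)^2 * Real.exp (-(π*((n:ℝ)+1/2)^2*y)) ≤ 2*(π*Real.exp (-(π/4*y))) := by
  have hy0 : (0:ℝ) < y := by linarith
  have hq : Real.exp (-(2*π*y)) ≤ 1/8 := by
    have h1 : Real.exp (-(2*π*y)) ≤ Real.exp (-3) := by
      apply Real.exp_le_exp.2
      nlinarith [Real.pi_gt_three]
    have h3 : Real.exp 3 = Real.exp 1 ^ 3 := by
      rw [show (3:ℝ) = ((3:ℕ):ℝ)*1 by norm_num, Real.exp_nat_mul]
    have h2 : Real.exp (-3) ≤ 1/8 := by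
      rw [Real.exp_neg, show (1/8 : ℝ) = 8⁻¹ by norm_num]
      apply inv_anti₀ (by norm_num)
      have h4 : (2.7:ℝ) ≤ Real.exp 1 := by linarith [Real.exp_one_gt_d9]
      have h5 : (2.7:ℝ)^3 ≤ Real.exp 1 ^ 3 := pow_le_pow_left₀ (by norm_num) h4 3
      rw [h3]
      nlinarith
    linarith
  set q : ℝ := 4 * Real.exp (-(2*π*y)) with hqdef
  have hq0 : 0 ≤ q := by positivity
  have hq1 : q ≤ 1/2 := by rw [hqdef]; linarith
  have majorant : ∀ n:ℕ, π*((n:ℝ)+1/2)^2 * Real.exp (-(π*((n:ℝ)+1/2)^2*y))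
      ≤ (π * Real.exp (-(π/4*y))) * q^n := by
    intro n
    have hn0 : (0:ℝ) ≤ (n:ℝ) := Nat.cast_nonneg n
    have hpow : ((n:ℝ)+1)^2 ≤ (4:ℝ)^n := by
      have h1 : (n+1 : ℕ) ≤ 2^n := Nat.lt_two_pow_self
      have h2 : ((n:ℝ)+1) ≤ (2:ℝ)^n := by exact_mod_cast h1
      calc ((n:ℝ)+1)^2 ≤ ((2:ℝ)^n)^2 := by nlinarith [pow_nonneg (by norm_num : (0:ℝ) ≤ 2) n]
        _ = (4:ℝ)^n := by rw [← pow_mul, mul_comm n 2, pow_mul]; norm_num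
    have hsq : ((n:ℝ)+1/2)^2 ≤ ((n:ℝ)+1)^2 := by nlinarith
    have hE : Real.exp (-(π*((n:ℝ)+1/2)^2*y)) ≤ Real.exp (-(π/4*y)) * Real.exp (-(2*π*y))^n := by
      rw [← Real.exp_nat_mul, ← Real.exp_add]
      apply Real.exp_le_exp.2
      have key : (0:ℝ) ≤ ((n:ℝ)^2 - (n:ℝ)) * (π*y) :=
        mul_nonneg (by linarith [le_sq_of_le (le_refl ((n:ℝ)))]) (by positivity)
      nlinarith [Real.pi_pos]
    calc π*((n:ℝ)+1/2)^2 * Real.exp (-(π*((n:ℝ)+1/2)^2*y))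
        ≤ π*(4:ℝ)^n * (Real.exp (-(π/4*y)) * Real.exp (-(2*π*y))^n) := by
          apply mul_le_mul ?_ hE (Real.exp_pos _).le (by positivity)
          have h5 := hsq.trans hpow
          nlinarith [Real.pi_pos]
      _ = (π * Real.exp (-(π/4*y))) * q^n := by rw [hqdef, mul_pow]; ring
  have hgeom : Summable fun n:ℕ => (π * Real.exp (-(π/4*y))) * q^n :=
    (summable_geometric_of_lt_one hq0 (by linarith)).mul_left _
  have hsummand : Summable fun n:ℕ => π*((n:ℝ)+1/2)^2 * Real.exp (-(π*((n:ℝ)+1/2)^2*y)) :=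
    summable_mul_exp_nsq (fun n => (n:ℝ)+1/2) (fun n => by simp) hy0
  calc ∑' n:ℕ, π*((n:ℝ)+1/2)^2 * Real.exp (-(π*((n:ℝ)+1/2)^2*y))
      ≤ ∑' n:ℕ, (π * Real.exp (-(π/4*y))) * q^n := Summable.tsum_le_tsum majorant hsummand hgeom
    _ = (π * Real.exp (-(π/4*y))) * (1-q)⁻¹ := by
        rw [tsum_mul_left, tsum_geometric_of_lt_one hq0 (by linarith)]
    _ ≤ 2*(π*Real.exp (-(π/4*y))) := by
        have h12 : (1-q)⁻¹ ≤ 2 := by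
          calc (1-q)⁻¹ ≤ ((1:ℝ)/2)⁻¹ := inv_anti₀ (by norm_num) (by linarith)
            _ = 2 := by norm_num
        have h13 := mul_le_mul_of_nonneg_left h12
          (show (0:ℝ) ≤ π * Real.exp (-(π/4*y)) by positivity)
        linarith

lemma S_bound_int {y : ℝ} (hy : 14 ≤ y) :
    ∑' n:ℤ, π*((n:ℝ)+1/2)^2 * Real.exp (-(π*((n:ℝ)+1/2)^2*y)) ≤ 4*π*Real.exp (-(π/4*y)) := by
  have hy0 : (0:ℝ) < y := by linarith
  have base := summable_mul_exp_nsq (fun n => (n:ℝ)+1/2) (fun n => by simp) hy0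
  have s1 : Summable (fun n:ℕ =>
      π*(((n:ℤ):ℝ)+1/2)^2 * Real.exp (-(π*(((n:ℤ):ℝ)+1/2)^2*y))) :=
    base.congr (fun n => by norm_num)
  have s2 : Summable (fun n:ℕ =>
      π*(((-((n:ℤ)+1) : ℤ):ℝ)+1/2)^2 * Real.exp (-(π*(((-((n:ℤ)+1) : ℤ):ℝ)+1/2)^2*y))) := by
    refine base.congr (fun n => ?_)
    have h := neg_cast_sq n
    push_cast at h ⊢
    rw [h]
  rw [tsum_of_nat_of_neg_add_one s1 s2]
  have e1 : ∑' n:ℕ, π*(((n:ℤ):ℝ)+1/2)^2 * Real.exp (-(π*(((n:ℤ):ℝ)+1/2)^2*y))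
      = ∑' n:ℕ, π*((n:ℝ)+1/2)^2 * Real.exp (-(π*((n:ℝ)+1/2)^2*y)) :=
    tsum_congr (fun n => by norm_num)
  have e2 : ∑' n:ℕ, π*(((-((n:ℤ)+1) : ℤ):ℝ)+1/2)^2 * Real.exp (-(π*(((-((n:ℤ)+1) : ℤ):ℝ)+1/2)^2*y))
      = ∑' n:ℕ, π*((n:ℝ)+1/2)^2 * Real.exp (-(π*((n:ℝ)+1/2)^2*y)) := by
    refine tsum_congr (fun n => ?_)
    have h := neg_cast_sq n
    push_cast at h ⊢
    rw [h]
  rw [e1, e2]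
  have hnat := tsum_nat_half_bound hy
  nlinarith [Real.exp_pos (-(π/4*y)), Real.pi_pos]

lemma small_numeric {x : ℝ} (hx0 : 0 < x) (hx14 : x ≤ 1/14) :
    (Real.sqrt x)⁻¹ * ((x^2)⁻¹ * (4*π*Real.exp (-(π/4*x⁻¹)))) ≤ 2*π*Real.exp (-(π*x)) := by
  have hs0 : 0 < Real.sqrt x := Real.sqrt_pos.2 hx0
  have hπl : π < 3.15 := Real.pi_lt_d2
  have hπg : 3 < π := Real.pi_gt_three
  have hs3 : 3*x ≤ Real.sqrt x := by
    have h1 : Real.sqrt x ≤ 1/3 := by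
      rw [show (1/3:ℝ) = Real.sqrt ((1/3)^2) from (Real.sqrt_sq (by norm_num)).symm]
      apply Real.sqrt_le_sqrt
      nlinarith
    nlinarith [Real.sq_sqrt hx0.le]
  have hE1 : Real.exp (-(π/4*x⁻¹)) ≤ 40320*((4/3)^8*x^8) := by
    have ht0 : (0:ℝ) < 3/(4*x) := by positivity
    have h8 : (3/(4*x))^8/40320 ≤ Real.exp (3/(4*x)) := by
      have hs := Real.sum_le_exp_of_nonneg ht0.le 9
      have hsingle : (3/(4*x))^8/(Nat.factorial 8 : ℝ)
          ≤ ∑ i ∈ Finset.range 9, (3/(4*x))^i / (Nat.factorial i : ℝ) :=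
        Finset.single_le_sum (f := fun i => (3/(4*x))^i / (Nat.factorial i : ℝ))
          (fun i _ => by positivity) (by norm_num : 8 ∈ Finset.range 9)
      calc (3/(4*x))^8/40320 = (3/(4*x))^8/(Nat.factorial 8 : ℝ) := by
            norm_num [Nat.factorial]
        _ ≤ ∑ i ∈ Finset.range 9, (3/(4*x))^i / (Nat.factorial i : ℝ) := hsingle
        _ ≤ Real.exp (3/(4*x)) := hs
    have h9 : Real.exp (3/(4*x)) ≤ Real.exp (π/4*x⁻¹) := by
      apply Real.exp_le_exp.2
      rw [show (3:ℝ)/(4*x) = 3/4 * x⁻¹ by rw [div_eq_mul_inv, mul_inv]; ring]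
      exact mul_le_mul_of_nonneg_right (by linarith) (inv_pos.2 hx0).le
    rw [Real.exp_neg]
    have hp : (0:ℝ) < (3/(4*x))^8/40320 := by positivity
    calc (Real.exp (π/4*x⁻¹))⁻¹ ≤ ((3/(4*x))^8/40320)⁻¹ :=
          inv_anti₀ hp (h8.trans h9)
      _ = 40320*((4/3)^8*x^8) := by
          rw [div_pow]
          field_simp
          all_goals ring
  have hE2 : 1 - π*x ≤ Real.exp (-(π*x)) := by linarith [Real.add_one_le_exp (-(π*x))]
  have step1 : (Real.sqrt x)⁻¹ * ((x^2)⁻¹ * (4*π*Real.exp (-(π/4*x⁻¹))))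
      ≤ (Real.sqrt x)⁻¹ * ((x^2)⁻¹ * (4*π*(40320*((4/3)^8*x^8)))) := by gcongr
  have step2 : (Real.sqrt x)⁻¹ * ((x^2)⁻¹ * (4*π*(40320*((4/3)^8*x^8))))
      ≤ (3*x)⁻¹ * ((x^2)⁻¹ * (4*π*(40320*((4/3)^8*x^8)))) :=
    mul_le_mul_of_nonneg_right (inv_anti₀ (by positivity) hs3) (by positivity)
  have eq3 : (3*x)⁻¹ * ((x^2)⁻¹ * (4*π*(40320*((4/3)^8*x^8)))) = π * (4*40320*(4/3)^8/3) * x^5 := by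
    field_simp
  have hπx : π*x ≤ 0.225 := by nlinarith
  have hx5 : x^5 ≤ (1/14:ℝ)^5 := pow_le_pow_left₀ hx0.le hx14 5
  have b1 : π * (4*40320*(4/3)^8/3) * x^5 ≤ 3.15 * (4*40320*(4/3)^8/3) * (1/14)^5 := by
    have hc : (0:ℝ) ≤ (4*40320*(4/3)^8/3) := by norm_num
    calc π * (4*40320*(4/3)^8/3) * x^5 ≤ π * (4*40320*(4/3)^8/3) * (1/14)^5 := by
          exact mul_le_mul_of_nonneg_left hx5 (by positivity)
      _ ≤ 3.15 * (4*40320*(4/3)^8/3) * (1/14)^5 := by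
          apply mul_le_mul_of_nonneg_right _ (by norm_num)
          exact mul_le_mul_of_nonneg_right hπl.le hc
  have b2 : (3.15:ℝ) * (4*40320*(4/3)^8/3) * (1/14)^5 ≤ 3.3 := by norm_num
  have b3 : (4.6:ℝ) ≤ 2*π*(1-π*x) := by
    have h775 : (0.775:ℝ) ≤ 1 - π*x := by linarith
    have h6 := mul_le_mul hπg.le h775 (by norm_num) (by positivity : (0:ℝ) ≤ π)
    linarith
  calc (Real.sqrt x)⁻¹ * ((x^2)⁻¹ * (4*π*Real.exp (-(π/4*x⁻¹))))
      ≤ (3*x)⁻¹ * ((x^2)⁻¹ * (4*π*(40320*((4/3)^8*x^8)))) := step1.trans step2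
    _ = π * (4*40320*(4/3)^8/3) * x^5 := eq3
    _ ≤ 2*π*(1-π*x) := by linarith
    _ ≤ 2*π*Real.exp (-(π*x)) := by nlinarith [Real.pi_pos]

lemma pair_le {x : ℝ} (hx14 : 1/14 ≤ x) {A : ℝ} (hA : 2 ≤ A) :
    π*(A+1)^2*Real.exp (-(π*(A+1)^2*x)) ≤ π*A^2*Real.exp (-(π*A^2*x)) := by
  have hx0 : (0:ℝ) < x := by linarith
  have hπ : 3 < π := Real.pi_gt_three
  have hπx : (3:ℝ)/14 ≤ π*x := by
    have := mul_le_mul hπ.le hx14 (by norm_num) Real.pi_pos.le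
    linarith
  have h1 : (1:ℝ) ≤ (2*A+1)*(π*x) := by
    have h5 := mul_le_mul (show (5:ℝ) ≤ 2*A+1 by linarith) hπx (by norm_num) (by linarith)
    linarith
  have h2 : Real.exp 1 ≤ Real.exp ((2*A+1)*(π*x)) := Real.exp_le_exp.2 h1
  have h3 : (9/4:ℝ) ≤ Real.exp 1 := by linarith [Real.exp_one_gt_d9]
  have h4 : (A+1)^2 ≤ A^2 * Real.exp ((2*A+1)*(π*x)) := by
    have hE94 : (9/4:ℝ) ≤ Real.exp ((2*A+1)*(π*x)) := le_trans h3 h2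
    have h6 := mul_le_mul_of_nonneg_left hE94 (sq_nonneg A)
    nlinarith [sq_nonneg (A-2)]
  calc π*(A+1)^2*Real.exp (-(π*(A+1)^2*x))
      ≤ π*(A^2*Real.exp ((2*A+1)*(π*x)))*Real.exp (-(π*(A+1)^2*x)) := by
        exact mul_le_mul_of_nonneg_right (mul_le_mul_of_nonneg_left h4 Real.pi_pos.le)
          (Real.exp_pos _).le
    _ = π*A^2*Real.exp (-(π*A^2*x)) := by
        rw [show π*(A^2*Real.exp ((2*A+1)*(π*x)))*Real.exp (-(π*(A+1)^2*x))
            = π*A^2*(Real.exp ((2*A+1)*(π*x))*Real.exp (-(π*(A+1)^2*x))) from by ring,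
          ← Real.exp_add]
        congr 2
        ring

lemma big_branch {x : ℝ} (hx14 : 1/14 ≤ x) :
    deriv (fun t:ℝ => 1 + 2*∑' n:ℕ, (-1:ℝ)^(n+1)*Real.exp (-(π*((n:ℝ)+1)^2*t))) x
      ≤ 2*π*Real.exp (-(π*x)) := by
  have hx0 : (0:ℝ) < x := by linarith
  have hD := hasDerivAt_tsum_exp (fun n : ℕ => (-1:ℝ)^(n+1)) (fun n : ℕ => π*((n:ℝ)+1)^2)
    (fun n => by rw [abs_pow, abs_neg, abs_one, one_pow]) (fun n => by positivity)
    (fun t ht => summable_mul_exp_nsq (fun n => (n:ℝ)+1) (fun n => by simp) ht)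
    (fun t ht => summable_exp_nsq (fun n => (n:ℝ)+1) (fun n => by simp) ht) hx0
  beta_reduce at hD
  have hFull := (hD.const_mul (2:ℝ)).const_add (1:ℝ)
  rw [hFull.deriv]
  set F : ℕ → ℝ :=
    fun n => -(π*((n:ℝ)+1)^2 * ((-1:ℝ)^(n+1) * Real.exp (-(π*((n:ℝ)+1)^2*x)))) with hF
  have hFs : Summable F := by
    refine Summable.of_norm_bounded
      (summable_mul_exp_nsq (fun n => (n:ℝ)+1) (fun n => by simp) hx0) ?_
    intro n
    have habs : ‖F n‖ = π*((n:ℝ)+1)^2 * Real.exp (-(π*((n:ℝ)+1)^2*x)) := by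
      simp only [hF, Real.norm_eq_abs, abs_neg, abs_mul, abs_pow, abs_one, one_pow, one_mul]
      rw [abs_of_nonneg Real.pi_pos.le, abs_of_nonneg (show (0:ℝ) ≤ (n:ℝ)+1 by positivity),
        abs_of_nonneg (Real.exp_pos _).le]
    rw [habs]
  rw [Summable.tsum_eq_zero_add hFs]
  have hF0 : F 0 = π * Real.exp (-(π*x)) := by
    simp only [hF]
    norm_num
  have hGe : Summable (fun k => F (2*k+1)) := hFs.comp_injective (fun a b h => by omega)
  have hGo : Summable (fun k => F (2*k+2)) := hFs.comp_injective (fun a b h => by omega)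
  have hpair : ∀ k:ℕ, F (2*k+1) + F (2*k+2) ≤ 0 := by
    intro k
    have hk0 : (0:ℝ) ≤ (k:ℝ) := Nat.cast_nonneg k
    have key := pair_le hx14 (A := 2*(k:ℝ)+2) (by linarith)
    have ha1 : (-1:ℝ)^(2*k+1+1) = 1 := by
      rw [show 2*k+1+1 = 2*(k+1) by ring, pow_mul]
      norm_num
    have ha2 : (-1:ℝ)^(2*k+2+1) = -1 := by
      rw [show 2*k+2+1 = 2*(k+1)+1 by ring, pow_succ, pow_mul]
      norm_num
    simp only [hF]
    rw [ha1, ha2]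
    push_cast
    ring_nf
    ring_nf at key
    linarith
  have hR : ∑' n, F (n+1) ≤ 0 := by
    calc ∑' n, F (n+1) = (∑' k, F (2*k+1)) + (∑' k, F (2*k+1+1)) :=
          (tsum_even_add_odd hGe hGo).symm
      _ = ∑' k, (F (2*k+1) + F (2*k+1+1)) := (Summable.tsum_add hGe hGo).symm
      _ ≤ 0 := tsum_nonpos (fun k => hpair k)
  rw [hF0]
  nlinarith [Real.pi_pos, Real.exp_pos (-(π*x))]

lemma small_branch {x : ℝ} (hx0 : 0 < x) (hx14 : x ≤ 1/14) :
    deriv (fun t:ℝ => 1 + 2*∑' n:ℕ, (-1:ℝ)^(n+1)*Real.exp (-(π*((n:ℝ)+1)^2*t))) x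
      ≤ 2*π*Real.exp (-(π*x)) := by
  have hy : (14:ℝ) ≤ x⁻¹ := by
    rw [show (14:ℝ) = ((1:ℝ)/14)⁻¹ by norm_num]
    exact inv_anti₀ hx0 hx14
  have hy0 : (0:ℝ) < x⁻¹ := by positivity
  have hH := hasDerivAt_tsum_exp (fun _ : ℤ => (1:ℝ)) (fun n : ℤ => π*((n:ℝ)+1/2)^2)
    (fun n => by norm_num) (fun n => by positivity)
    (fun t ht => summable_mul_exp_int ht) (fun t ht => summable_exp_int ht) hy0
  simp only [one_mul] at hH
  -- (hH already beta-reduced)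
  have hIv : HasDerivAt (fun t:ℝ => t⁻¹) (-(x^2)⁻¹) x := hasDerivAt_inv hx0.ne'
  have hcomp := HasDerivAt.comp x hH hIv
  have hsqrt : HasDerivAt (fun t:ℝ => (Real.sqrt t)⁻¹)
      (-(1/(2*Real.sqrt x)) / (Real.sqrt x)^2) x :=
    (Real.hasDerivAt_sqrt hx0.ne').inv (Real.sqrt_ne_zero'.2 hx0)
  have hprod := hsqrt.mul hcomp
  have hEv : (fun t:ℝ => 1 + 2*∑' n:ℕ, (-1:ℝ)^(n+1)*Real.exp (-(π*((n:ℝ)+1)^2*t)))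
      =ᶠ[nhds x] (fun t => (Real.sqrt t)⁻¹ *
        ((fun u:ℝ => ∑' n:ℤ, Real.exp (-(π*((n:ℝ)+1/2)^2 * u))) ∘ fun t:ℝ => t⁻¹) t) := by
    filter_upwards [Ioi_mem_nhds hx0] with t ht
    exact poisson ht
  have hMain := hprod.congr_of_eventuallyEq hEv
  rw [hMain.deriv]
  simp only [Function.comp]
  set S : ℝ := ∑' n:ℤ, π*((n:ℝ)+1/2)^2 * Real.exp (-(π*((n:ℝ)+1/2)^2 * x⁻¹)) with hSdef
  have hdH : (∑' n:ℤ, -(π*((n:ℝ)+1/2)^2 * Real.exp (-(π*((n:ℝ)+1/2)^2 * x⁻¹)))) = -S := by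
    rw [hSdef, ← tsum_neg]
  have hHnn : (0:ℝ) ≤ ∑' n:ℤ, Real.exp (-(π*((n:ℝ)+1/2)^2 * x⁻¹)) :=
    tsum_nonneg (fun n => (Real.exp_pos _).le)
  have hterm1 : -(1/(2*Real.sqrt x)) / (Real.sqrt x)^2
      * (∑' n:ℤ, Real.exp (-(π*((n:ℝ)+1/2)^2 * x⁻¹))) ≤ 0 := by
    apply mul_nonpos_iff.2
    refine Or.inr ⟨?_, hHnn⟩
    apply div_nonpos_of_nonpos_of_nonneg _ (sq_nonneg _)
    have : (0:ℝ) ≤ 1/(2*Real.sqrt x) := by positivity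
    linarith
  have hSnn : 0 ≤ S := by
    rw [hSdef]
    exact tsum_nonneg (fun n => by positivity)
  have hSb : S ≤ 4*π*Real.exp (-(π/4*x⁻¹)) := S_bound_int hy
  have hnum := small_numeric hx0 hx14
  calc -(1/(2*Real.sqrt x)) / (Real.sqrt x)^2
        * (∑' n:ℤ, Real.exp (-(π*((n:ℝ)+1/2)^2 * x⁻¹)))
        + (Real.sqrt x)⁻¹ * ((∑' n:ℤ, -(π*((n:ℝ)+1/2)^2 * Real.exp (-(π*((n:ℝ)+1/2)^2 * x⁻¹))))
          * -(x^2)⁻¹)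
      ≤ (Real.sqrt x)⁻¹ * ((x^2)⁻¹ * S) := by
        rw [hdH]
        have hrw : (Real.sqrt x)⁻¹ * (-S * -(x^2)⁻¹) = (Real.sqrt x)⁻¹ * ((x^2)⁻¹ * S) := by ring
        linarith [hterm1]
    _ ≤ (Real.sqrt x)⁻¹ * ((x^2)⁻¹ * (4*π*Real.exp (-(π/4*x⁻¹)))) := by gcongr
    _ ≤ 2*π*Real.exp (-(π*x)) := hnum

theorem phi_deriv_le_aux (x : ℝ) (hx : 0 < x) :
    deriv (fun x : ℝ =>
        1 + 2 * ∑' n : ℕ, (-1 : ℝ) ^ (n + 1) * Real.exp (-π * ((n : ℝ) + 1) ^ 2 * x)) x ≤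
      2 * π * Real.exp (-π * x) := by
  have hgoal : (fun x : ℝ =>
      1 + 2 * ∑' n : ℕ, (-1 : ℝ) ^ (n + 1) * Real.exp (-π * ((n : ℝ) + 1) ^ 2 * x))
      = (fun t : ℝ => 1 + 2 * ∑' n : ℕ, (-1 : ℝ) ^ (n + 1) * Real.exp (-(π * ((n : ℝ) + 1) ^ 2 * t))) := by
    funext t
    simp only [neg_mul]
  rw [hgoal, show -π*x = -(π*x) by ring]
  rcases le_total x (1/14) with h | h
  · exact small_branch hx h
  · exact big_branch h


end PhiDerivAux

/-- For all `x > 0`, the derivative of `φ(x) = 1 + 2∑_{n=1}^∞ (-1)^n e^{-π n² x}`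
satisfies `φ'(x) ≤ 2π e^{-π x}`. -/
theorem phi_deriv_le (x : ℝ) (hx : 0 < x) :
    deriv (fun x : ℝ =>
        1 + 2 * ∑' n : ℕ, (-1 : ℝ) ^ (n + 1) * Real.exp (-π * ((n : ℝ) + 1) ^ 2 * x)) x ≤
      2 * π * Real.exp (-π * x) :=
  PhiDerivAux.phi_deriv_le_aux x hx
end

section
/- For 0 < x < 1, the derivative of φ(x) = (2/√x) ∑_{n=0}^∞ e^{-π(n+1/2)²/x} satisfies φ'(x) ≤ (π/2) x^{-5/2} e^{-π/(4x)}. -/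
open Real

private noncomputable def cc (n : ℕ) : ℝ := π * ((n : ℝ) + 1 / 2) ^ 2

private lemma cc_pos (n : ℕ) : 0 < cc n := by
  unfold cc; positivity

private lemma cc_ge_n (n : ℕ) : (n : ℝ) ≤ cc n := by
  unfold cc
  nlinarith [pi_gt_three, Nat.cast_nonneg (α := ℝ) n, sq_nonneg ((n : ℝ) - 1/2)]

private lemma cc_ge_pin (n : ℕ) : π * (n : ℝ) ≤ cc n := by
  unfold cc
  nlinarith [pi_gt_three, Nat.cast_nonneg (α := ℝ) n, sq_nonneg ((n : ℝ) - 1/2)]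

private lemma cc_le (n : ℕ) : cc n ≤ π * ((n : ℝ) + 1) ^ 2 := by
  unfold cc
  nlinarith [pi_gt_three, Nat.cast_nonneg (α := ℝ) n]

private lemma cc_succ (n : ℕ) : cc (n + 1) = cc n + 2 * π * ((n : ℝ) + 1) := by
  unfold cc; push_cast; ring

private lemma hasDerivAt_term (n : ℕ) {y : ℝ} (hy : y ≠ 0) :
    HasDerivAt (fun z : ℝ => Real.exp (-cc n / z))
      (cc n / y ^ 2 * Real.exp (-cc n / y)) y := by
  have h0 : HasDerivAt (fun z : ℝ => -cc n * z⁻¹) (-cc n * -(y ^ 2)⁻¹) y :=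
    (hasDerivAt_inv hy).const_mul (-cc n)
  have h1 : HasDerivAt (fun z : ℝ => -cc n / z) (cc n / y ^ 2) y := by
    have heq : (fun z : ℝ => -cc n / z) = fun z : ℝ => -cc n * z⁻¹ := by
      funext z; rw [div_eq_mul_inv]
    rw [heq, show cc n / y ^ 2 = -cc n * -(y ^ 2)⁻¹ by field_simp]
    exact h0
  have := h1.exp
  convert this using 1
  ring

private lemma key_ineq {m t : ℝ} (hm : 1 ≤ m) (ht : 1 ≤ t) :
    2 * π * (m + 1 / 2) ^ 2 * t ≤ Real.exp (2 * π * m * t) := by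
  have hy : (0 : ℝ) ≤ 2 * π * m * t := by positivity
  have hq := Real.quadratic_le_exp_of_nonneg hy
  have hπ := pi_gt_three
  have hπt : (3 : ℝ) ≤ π * t := by nlinarith
  have h1 : 3 * m ^ 2 ≤ π * m ^ 2 * t := by
    nlinarith [mul_le_mul_of_nonneg_right hπt (sq_nonneg m)]
  have h2 : (m + 1 / 2) ^ 2 ≤ 3 * m ^ 2 := by nlinarith
  have h3 : 2 * π * (m + 1 / 2) ^ 2 * t ≤ 2 * π * (π * m ^ 2 * t) * t := by
    nlinarith [h2.trans h1, mul_pos (mul_pos (by norm_num : (0:ℝ) < 2) pi_pos)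
      (lt_of_lt_of_le one_pos ht)]
  nlinarith

set_option maxHeartbeats 1000000 in
/-- For `0 < x < 1`, the derivative of `φ(x) = (2/√x) ∑_{n=0}^∞ e^{-π(n+1/2)²/x}`
satisfies `φ'(x) ≤ (π/2) x^{-5/2} e^{-π/(4x)}`. -/
theorem phi_deriv_le_small_x (x : ℝ) (hx0 : 0 < x) (hx1 : x < 1) :
    deriv (fun x : ℝ =>
        (2 / Real.sqrt x) * ∑' n : ℕ, Real.exp (-π * ((n : ℝ) + 1 / 2) ^ 2 / x)) x ≤
      (π / 2) * x ^ (-(5 : ℝ) / 2) * Real.exp (-π / (4 * x)) := by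
  have hsx : 0 < Real.sqrt x := Real.sqrt_pos.2 hx0
  -- rewrite the function using `cc`
  have hfun : (fun x : ℝ => (2 / Real.sqrt x) *
      ∑' n : ℕ, Real.exp (-π * ((n : ℝ) + 1 / 2) ^ 2 / x)) =
      fun y : ℝ => (2 / Real.sqrt y) * ∑' n : ℕ, Real.exp (-cc n / y) := by
    funext y
    congr 1
    exact tsum_congr fun n => by rw [show -π * ((n : ℝ) + 1/2) ^ 2 / y = -cc n / y by
      unfold cc; ring]
  rw [hfun]
  -- the open set and the summable bound on the derivatives
  have hxt : x ∈ Set.Ioo (x / 2) 1 := ⟨by linarith, hx1⟩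
  set r : ℝ := Real.exp (-π) with hr_def
  have hr0 : 0 ≤ r := (Real.exp_pos _).le
  have hr1 : r < 1 := Real.exp_lt_one_iff.2 (neg_neg_iff_pos.2 pi_pos)
  set u : ℕ → ℝ := fun n => π * ((n : ℝ) + 1) ^ 2 / (x / 2) ^ 2 * r ^ n with hu_def
  have hu : Summable u := by
    have h2 : Summable fun n : ℕ => (n : ℝ) ^ 2 * r ^ n :=
      summable_pow_mul_geometric_of_norm_lt_one 2
        (by rwa [Real.norm_eq_abs, abs_of_pos (Real.exp_pos _)])
    have h3 : Summable fun n : ℕ => r ^ n := summable_geometric_of_lt_one hr0 hr1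
    have h4 : Summable fun n : ℕ => 2 * ((n : ℝ) ^ 2 * r ^ n) + 2 * r ^ n :=
      (h2.mul_left 2).add (h3.mul_left 2)
    have h5 : Summable fun n : ℕ => ((n : ℝ) + 1) ^ 2 * r ^ n := by
      refine h4.of_nonneg_of_le (fun n => by positivity) fun n => ?_
      have hrp : (0 : ℝ) ≤ r ^ n := by positivity
      nlinarith [sq_nonneg ((n : ℝ) - 1)]
    exact (h5.mul_left (π / (x / 2) ^ 2)).congr fun n => by ring
  -- bound on derivatives on the set
  have hbound : ∀ (n : ℕ) (y : ℝ), y ∈ Set.Ioo (x / 2) 1 →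
      ‖cc n / y ^ 2 * Real.exp (-cc n / y)‖ ≤ u n := by
    intro n y hy
    have hy0 : 0 < y := lt_trans (by positivity) hy.1
    have hE : Real.exp (-cc n / y) ≤ r ^ n := by
      rw [hr_def, ← Real.exp_nat_mul]
      apply Real.exp_le_exp.2
      have h1 : cc n ≤ cc n / y := by
        rw [le_div_iff₀ hy0]; nlinarith [cc_pos n, hy.2]
      have h2 : π * (n : ℝ) ≤ cc n := cc_ge_pin n
      have : (n : ℝ) * -π = -(π * (n : ℝ)) := by ring
      rw [this, neg_div]
      linarith
    rw [norm_of_nonneg (mul_nonneg (div_nonneg (cc_pos n).le (sq_nonneg y))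
      (Real.exp_pos _).le)]
    show _ ≤ π * ((n : ℝ) + 1) ^ 2 / (x / 2) ^ 2 * r ^ n
    have hx2 : (0 : ℝ) < x / 2 := by positivity
    gcongr
    · exact cc_le n
    · exact hy.1.le
  -- derivative of the series
  have hg0 : Summable fun n : ℕ => Real.exp (-cc n / x) := by
    refine (summable_geometric_of_lt_one (Real.exp_pos (-1)).le
      (Real.exp_lt_one_iff.2 (by norm_num))).of_nonneg_of_le
      (fun n => (Real.exp_pos _).le) fun n => ?_
    rw [← Real.exp_nat_mul]
    apply Real.exp_le_exp.2
    have h1 : cc n ≤ cc n / x := by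
      rw [le_div_iff₀ hx0]; nlinarith [cc_pos n]
    have h2 : (n : ℝ) ≤ cc n := cc_ge_n n
    have : (n : ℝ) * (-1) = -(n : ℝ) := by ring
    rw [this, neg_div]
    linarith
  have hS' : HasDerivAt (fun z : ℝ => ∑' n : ℕ, Real.exp (-cc n / z))
      (∑' n : ℕ, cc n / x ^ 2 * Real.exp (-cc n / x)) x :=
    hasDerivAt_tsum_of_isPreconnected hu isOpen_Ioo
      (convex_Ioo _ _).isPreconnected
      (fun n y hy => hasDerivAt_term n (ne_of_gt (lt_trans (by positivity) hy.1)))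
      hbound hxt hg0 hxt
  -- derivative of 2 / sqrt
  have h1 : HasDerivAt (fun y : ℝ => 2 / Real.sqrt y) (-(1 / (x * Real.sqrt x))) x := by
    have hs := (Real.hasDerivAt_sqrt hx0.ne').inv hsx.ne'
    have h2 := hs.const_mul (2 : ℝ)
    have heq : (fun y : ℝ => 2 / Real.sqrt y) = fun y : ℝ => 2 * (Real.sqrt y)⁻¹ := by
      funext y; rw [div_eq_mul_inv]
    rw [heq]
    refine h2.congr_deriv ?_
    rw [Real.sq_sqrt hx0.le]
    field_simp
  have hD := (h1.mul hS').deriv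
  rw [show (fun y => 2 / Real.sqrt y * ∑' n : ℕ, Real.exp (-cc n / y)) =
    ((fun y : ℝ => 2 / Real.sqrt y) * fun z : ℝ => ∑' n : ℕ, Real.exp (-cc n / z)) from rfl, hD]
  -- now the estimate
  set E : ℕ → ℝ := fun n => Real.exp (-cc n / x) with hE_def
  set a : ℕ → ℝ := fun n => (2 * cc n / x * E n) * (1 / (x * Real.sqrt x)) with ha_def
  set b : ℕ → ℝ := fun n => E n * (1 / (x * Real.sqrt x)) with hb_def
  have hg'x : Summable fun n : ℕ => cc n / x ^ 2 * E n :=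
    Summable.of_norm_bounded hu fun n => hbound n x hxt
  have ha : Summable a := by
    refine (hg'x.mul_left (2 / Real.sqrt x)).congr fun n => ?_
    simp only [ha_def]
    field_simp
  have hb : Summable b := hg0.mul_right _
  have hsa : (2 / Real.sqrt x) * (∑' n : ℕ, cc n / x ^ 2 * E n) = ∑' n, a n := by
    rw [← tsum_mul_left]
    refine tsum_congr fun n => ?_
    simp only [ha_def]
    field_simp
  have hsb : (1 / (x * Real.sqrt x)) * (∑' n : ℕ, E n) = ∑' n, b n := by
    rw [← tsum_mul_left]
    exact tsum_congr fun n => by simp only [hb_def]; ring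
  have hDval : -(1 / (x * Real.sqrt x)) * (∑' n : ℕ, E n) +
      2 / Real.sqrt x * (∑' n : ℕ, cc n / x ^ 2 * E n)
      = (∑' n, a n) - (∑' n, b n) := by
    rw [← hsa, ← hsb]; ring
  rw [hDval]
  -- termwise comparison
  have key : ∀ n : ℕ, a (n + 1) ≤ b n := by
    intro n
    have hm : (1 : ℝ) ≤ (n : ℝ) + 1 := by
      have := Nat.cast_nonneg (α := ℝ) n; linarith
    have ht : (1 : ℝ) ≤ 1 / x := by
      rw [le_div_iff₀ hx0]; linarith
    have hk := key_ineq hm ht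
    -- hk : 2π((n+1)+1/2)² (1/x) ≤ exp (2π(n+1) (1/x))
    have hcc1 : 2 * cc (n + 1) / x = 2 * π * (((n : ℝ) + 1) + 1 / 2) ^ 2 * (1 / x) := by
      unfold cc; push_cast; ring
    have hexp : E (n + 1) = E n * Real.exp (-(2 * π * ((n : ℝ) + 1) * (1 / x))) := by
      simp only [hE_def]
      rw [← Real.exp_add]
      congr 1
      rw [cc_succ]
      field_simp
      ring
    have hmain : 2 * cc (n + 1) / x * E (n + 1) ≤ E n := by
      rw [hexp, hcc1]
      calc 2 * π * (((n : ℝ) + 1) + 1 / 2) ^ 2 * (1 / x) *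
            (E n * Real.exp (-(2 * π * ((n : ℝ) + 1) * (1 / x))))
          ≤ Real.exp (2 * π * ((n : ℝ) + 1) * (1 / x)) *
            (E n * Real.exp (-(2 * π * ((n : ℝ) + 1) * (1 / x)))) := by
            apply mul_le_mul_of_nonneg_right hk
            positivity
        _ = E n := by
            rw [show Real.exp (2 * π * ((n : ℝ) + 1) * (1 / x)) *
              (E n * Real.exp (-(2 * π * ((n : ℝ) + 1) * (1 / x)))) =
              E n * (Real.exp (2 * π * ((n : ℝ) + 1) * (1 / x)) *
                Real.exp (-(2 * π * ((n : ℝ) + 1) * (1 / x)))) by ring,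
              ← Real.exp_add]
            simp
    simp only [ha_def, hb_def]
    apply mul_le_mul_of_nonneg_right hmain
    positivity
  have hsplit : (∑' n, a n) = a 0 + ∑' n, a (n + 1) := Summable.tsum_eq_zero_add ha
  have hle : (∑' n, a (n + 1)) ≤ ∑' n, b n :=
    Summable.tsum_le_tsum key ((summable_nat_add_iff 1).2 ha) hb
  have ha0 : a 0 = (π / 2) * x ^ (-(5 : ℝ) / 2) * Real.exp (-π / (4 * x)) := by
    have hrp : x ^ (-(5 : ℝ) / 2) = 1 / (x ^ 2 * Real.sqrt x) := by
      rw [show (-(5 : ℝ) / 2) = -(2 + 1 / 2) by norm_num, Real.rpow_neg hx0.le,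
        Real.rpow_add hx0, ← Real.sqrt_eq_rpow,
        show ((2 : ℝ)) = ((2 : ℕ) : ℝ) by norm_num, Real.rpow_natCast]
      rw [one_div]
    have hccz : cc 0 = π / 4 := by unfold cc; push_cast; ring
    simp only [ha_def, hE_def, hrp, hccz]
    rw [show -(π / 4) / x = -π / (4 * x) by ring]
    field_simp
    ring

  rw [hsplit, ha0]
  linarith
end

section
/- If φ : (0,∞) → ℝ is increasing with φ' ≥ 0, φ'(x) ≤ 2π e^{-πx} for all x > 0, φ'(x) ≤ (π/2)x^{-5/2}e^{-π/(4x)} for 0 < x < 1, and lim_{x→∞} φ(x) = 1 with lim_{x→0⁺} φ(x) = 0, then for σ > 0: ∫₀^∞ (1+x²)^{σ/4} φ'(x) dx ≤ 3 · 2^{σ/4} Γ(1 + σ/2). -/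
open Real

section Aux

open Set MeasureTheory

lemma gamma_lb {t : ℝ} (ht : 0 < t) : (4:ℝ)/5 ≤ Real.Gamma (1+t) := by
  rcases le_or_gt t 1 with h1 | h1
  · have hmem1 : (1+t : ℝ) ∈ Ioi (0:ℝ) := by simp; linarith
    have hmem2 : (2+t : ℝ) ∈ Ioi (0:ℝ) := by simp; linarith
    have hcvx := Real.convexOn_Gamma.2 hmem1 hmem2 (le_of_lt ht) (by linarith : (0:ℝ) ≤ 1 - t)
      (by ring)
    have hpt : t • (1+t) + (1-t) • (2+t) = (2:ℝ) := by simp [smul_eq_mul]; ring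
    rw [hpt, Real.Gamma_two] at hcvx
    have hadd : Real.Gamma (2+t) = (1+t) * Real.Gamma (1+t) := by
      have : (2+t : ℝ) = (1+t) + 1 := by ring
      rw [this, Real.Gamma_add_one (by linarith : (1+t : ℝ) ≠ 0)]
    rw [hadd] at hcvx
    simp only [smul_eq_mul] at hcvx
    nlinarith [Real.Gamma_pos_of_pos (show (0:ℝ) < 1+t by linarith), sq_nonneg (t - 1/2)]
  · have hmem1 : (1:ℝ) ∈ Ioi (0:ℝ) := by simp
    have hmem2 : (1+t : ℝ) ∈ Ioi (0:ℝ) := by simp; linarith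
    have ht0 : (0:ℝ) < t := ht
    have hab : (t-1)/t + 1/t = 1 := by field_simp; ring
    have ha : (0:ℝ) ≤ (t-1)/t := div_nonneg (by linarith) ht0.le
    have hb : (0:ℝ) ≤ 1/t := by positivity
    have hcvx := Real.convexOn_Gamma.2 hmem1 hmem2 ha hb hab
    have hpt : ((t-1)/t) • (1:ℝ) + (1/t) • (1+t) = (2:ℝ) := by
      field_simp [smul_eq_mul]; ring_nf; simp [ht0.ne']
    rw [hpt, Real.Gamma_two, Real.Gamma_one] at hcvx
    simp only [smul_eq_mul] at hcvx
    rw [mul_one] at hcvx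
    have h2 := mul_le_mul_of_nonneg_left hcvx ht0.le
    rw [mul_add, mul_one] at h2
    have e1 : t * ((t-1)/t) = t - 1 := by field_simp
    have e2 : t * (1/t * Real.Gamma (1+t)) = Real.Gamma (1+t) := by field_simp
    linarith

lemma exp_three_lb : (20.08:ℝ) ≤ Real.exp 3 := by
  have he := Real.exp_one_gt_d9
  have h3 : Real.exp 3 = (Real.exp 1)^3 := by
    rw [← Real.exp_nat_mul]; norm_num
  have hc : (2.7182818283:ℝ)^3 ≤ (Real.exp 1)^3 := by
    apply pow_le_pow_left₀ (by norm_num) he.le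
  rw [h3]
  nlinarith [hc]

lemma aux1 {x : ℝ} (hx : 0 < x) :
    π / 2 * x ^ (-(5:ℝ)/2) * Real.exp (-π / (4 * x)) ≤ 22/5 * x ^ ((1:ℝ)/2) := by
  have hu : 0 < π/(4*x) := by positivity
  set u := π/(4*x) with hu_def
  have harg : -π / (4*x) = -u := by rw [hu_def]; ring
  rw [harg]
  have h1 : u/3 ≤ Real.exp (u/3 - 1) := by
    have := Real.add_one_le_exp (u/3 - 1); linarith
  have h2 : (u/3)^3 ≤ (Real.exp (u/3-1))^3 := pow_le_pow_left₀ (by positivity) h1 3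
  have h3 : (Real.exp (u/3-1))^3 = Real.exp (u - 3) := by
    rw [← Real.exp_nat_mul]
    congr 1
    push_cast
    ring
  have h5 : Real.exp (u-3) = Real.exp u / Real.exp 3 := Real.exp_sub u 3
  rw [h3, h5] at h2
  have hcube : (u/3)^3 = u^3/27 := by ring
  rw [hcube, div_le_div_iff₀ (by norm_num) (Real.exp_pos 3)] at h2
  have hexpneg : Real.exp (-u) ≤ 27 / (Real.exp 3 * u^3) := by
    rw [Real.exp_neg, inv_eq_one_div, div_le_div_iff₀ (Real.exp_pos u) (by positivity)]
    nlinarith [Real.exp_pos 3, Real.exp_pos u]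
  have hx3 : x ^ ((3:ℕ):ℝ) = x^(3:ℕ) := Real.rpow_natCast x 3
  have hx52 : x ^ (-(5:ℝ)/2) * x^((3:ℕ):ℝ) = x ^ ((1:ℝ)/2) := by
    rw [← Real.rpow_add hx]; norm_num
  have hu3 : u^3 = π^3 / (64 * x^3) := by
    rw [hu_def]; field_simp; ring
  have hy : (0:ℝ) < x ^ (-(5:ℝ)/2) := Real.rpow_pos_of_pos hx _
  calc π/2 * x ^ (-(5:ℝ)/2) * Real.exp (-u)
      ≤ π/2 * x ^ (-(5:ℝ)/2) * (27/(Real.exp 3 * u^3)) := by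
        apply mul_le_mul_of_nonneg_left hexpneg (by positivity)
    _ = (864/(Real.exp 3 * π^2)) * (x ^ (-(5:ℝ)/2) * x^(3:ℕ)) := by
        rw [hu3]
        have hpi := Real.pi_pos
        have he3 := Real.exp_pos 3
        field_simp
        ring
    _ ≤ (22/5) * (x ^ (-(5:ℝ)/2) * x^(3:ℕ)) := by
        apply mul_le_mul_of_nonneg_right _ (by positivity)
        rw [div_le_div_iff₀ (by positivity) (by norm_num)]
        have he3 := exp_three_lb
        have hpi := Real.pi_gt_d6
        nlinarith
    _ = 22/5 * x ^ ((1:ℝ)/2) := by rw [← hx52, hx3]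

lemma num1 : π * Real.exp (-(π/2)) ≤ 0.71 := by
  have h32 : (4.48:ℝ) ≤ Real.exp (3/2) := by
    have h2 : (Real.exp (3/2))^2 = Real.exp 3 := by
      rw [← Real.exp_nat_mul]; norm_num
    nlinarith [Real.exp_pos (3/2), exp_three_lb]
  have hmono : Real.exp (3/2) ≤ Real.exp (π/2) :=
    Real.exp_le_exp.2 (by nlinarith [Real.pi_gt_d6])
  have hpi' := Real.pi_lt_d2
  rw [Real.exp_neg]
  have hE : (4.48:ℝ) ≤ Real.exp (π/2) := le_trans h32 hmono
  have hinv : (Real.exp (π/2))⁻¹ ≤ (4.48:ℝ)⁻¹ := by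
    apply inv_anti₀ (by norm_num) hE
  calc π * (Real.exp (π/2))⁻¹ ≤ 3.15 * (4.48:ℝ)⁻¹ := by
        apply mul_le_mul (le_of_lt hpi') hinv (by positivity) (by norm_num)
    _ ≤ 0.71 := by norm_num

lemma num2 : 2 * π * Real.exp (1 - π) ≤ 3/4 := by
  have he := Real.exp_one_gt_d9
  have h2 : Real.exp 2 = (Real.exp 1)^2 := by
    rw [← Real.exp_nat_mul]; norm_num
  have hq : (1.141592:ℝ) ≤ Real.exp 0.141592 := by
    have := Real.add_one_le_exp (0.141592:ℝ); linarith
  have hsplit : Real.exp (2.141592 : ℝ) = Real.exp 2 * Real.exp 0.141592 := by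
    rw [← Real.exp_add]; norm_num
  have hE : (8.43:ℝ) ≤ Real.exp (2.141592:ℝ) := by
    rw [hsplit, h2]
    nlinarith [Real.exp_pos 1]
  have hmono : Real.exp (2.141592:ℝ) ≤ Real.exp (π - 1) :=
    Real.exp_le_exp.2 (by nlinarith [Real.pi_gt_d6])
  have hE' : (8.43:ℝ) ≤ Real.exp (π-1) := le_trans hE hmono
  have harg : (1 - π : ℝ) = -(π - 1) := by ring
  rw [harg, Real.exp_neg]
  have hinv : (Real.exp (π-1))⁻¹ ≤ (8.43:ℝ)⁻¹ := inv_anti₀ (by norm_num) hE'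
  have hpi' := Real.pi_lt_d2
  calc 2 * π * (Real.exp (π-1))⁻¹ ≤ (2*3.15) * (8.43:ℝ)⁻¹ := by
        apply mul_le_mul (by linarith) hinv (by positivity) (by norm_num)
    _ ≤ 3/4 := by norm_num

end Aux


/-- If `φ` is increasing on `(0,∞)` with `φ' ≥ 0`, `φ'(x) ≤ 2πe^{-πx}` for `x > 0`,
`φ'(x) ≤ (π/2)x^{-5/2}e^{-π/(4x)}` for `0 < x < 1`, `φ(x) → 1` as `x → ∞` and `φ(x) → 0` as
`x → 0⁺`, then for `σ > 0`, `∫₀^∞ (1+x²)^{σ/4} φ'(x) dx ≤ 3·2^{σ/4} Γ(1+σ/2)`. -/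
theorem integral_bound_pos_sigma (φ : ℝ → ℝ)
    (hmono : MonotoneOn φ (Set.Ioi 0))
    (hderiv_nonneg : ∀ x : ℝ, 0 < x → 0 ≤ deriv φ x)
    (hderiv_le : ∀ x : ℝ, 0 < x → deriv φ x ≤ 2 * π * Real.exp (-π * x))
    (hderiv_le' : ∀ x : ℝ, 0 < x → x < 1 →
      deriv φ x ≤ (π / 2) * x ^ (-(5 : ℝ) / 2) * Real.exp (-π / (4 * x)))
    (hlim_top : Filter.Tendsto φ Filter.atTop (nhds 1))
    (hlim_zero : Filter.Tendsto φ (nhdsWithin 0 (Set.Ioi 0)) (nhds 0))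
    (σ : ℝ) (hσ : 0 < σ) :
    ∫ x in Set.Ioi (0 : ℝ), (1 + x ^ 2) ^ (σ / 4) * deriv φ x ≤
      3 * (2 : ℝ) ^ (σ / 4) * Real.Gamma (1 + σ / 2) := by
    classical
  open Set MeasureTheory in
  have hA : (0:ℝ) < (2:ℝ)^(σ/4) := Real.rpow_pos_of_pos two_pos _
  set A := (2:ℝ)^(σ/4) with hAdef
  set F := fun x : ℝ => (1 + x ^ 2) ^ (σ / 4) * deriv φ x with hFdef
  have hFm : Measurable F := by
    apply Measurable.mul _ (measurable_deriv φ)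
    exact ((continuous_const.add (continuous_pow 2)).rpow_const
      (fun x => Or.inr (by linarith))).measurable
  have hFnn : ∀ x : ℝ, 0 < x → 0 ≤ F x := fun x hx =>
    mul_nonneg (Real.rpow_nonneg (by positivity) _) (hderiv_nonneg x hx)
  -- pointwise bound on (0,1]: (1+x^2)^(σ/4) ≤ A
  have hbase : ∀ x : ℝ, 0 < x → x ≤ 1 → (1 + x ^ 2) ^ (σ/4) ≤ A := by
    intro x hx hx1
    rw [hAdef]
    apply Real.rpow_le_rpow (by positivity) (by nlinarith) (by positivity)
  -- piece 1 majorant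
  set g1 := fun x : ℝ => A * (22/5 * x ^ ((1:ℝ)/2)) with hg1def
  have hg1i : IntegrableOn g1 (Ioc 0 (1/2)) := by
    have h0 : IntervalIntegrable (fun x : ℝ => x ^ ((1:ℝ)/2)) volume 0 (1/2) :=
      intervalIntegral.intervalIntegrable_rpow' (by norm_num)
    have h1 := (intervalIntegrable_iff_integrableOn_Ioc_of_le (by norm_num)).1 h0
    exact (h1.const_mul (A * (22/5))).congr
      (Filter.Eventually.of_forall fun x => by simp only [hg1def]; ring)
  have hb1 : ∀ x ∈ Ioc (0:ℝ) (1/2), F x ≤ g1 x := by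
    intro x hx
    have hx0 : 0 < x := hx.1
    have hx1 : x < 1 := lt_of_le_of_lt hx.2 (by norm_num)
    calc F x ≤ A * deriv φ x :=
          mul_le_mul_of_nonneg_right (hbase x hx0 (by linarith)) (hderiv_nonneg x hx0)
      _ ≤ A * ((π / 2) * x ^ (-(5:ℝ)/2) * Real.exp (-π / (4 * x))) :=
          mul_le_mul_of_nonneg_left (hderiv_le' x hx0 hx1) hA.le
      _ ≤ A * (22/5 * x ^ ((1:ℝ)/2)) := by
          apply mul_le_mul_of_nonneg_left _ hA.le
          have := aux1 hx0
          calc (π / 2) * x ^ (-(5:ℝ)/2) * Real.exp (-π / (4 * x))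
              = π / 2 * x ^ (-(5:ℝ)/2) * Real.exp (-π / (4 * x)) := by ring
            _ ≤ 22/5 * x ^ ((1:ℝ)/2) := this
      _ = g1 x := rfl
  have hF1i : IntegrableOn F (Ioc 0 (1/2)) := by
    apply Integrable.mono' (g := fun _ => A * (2*π)) _ (hFm.aestronglyMeasurable.restrict)
    · filter_upwards [ae_restrict_mem measurableSet_Ioc] with x hx
      have hx0 : 0 < x := hx.1
      rw [Real.norm_of_nonneg (hFnn x hx0)]
      calc F x ≤ A * deriv φ x :=
            mul_le_mul_of_nonneg_right (hbase x hx0 (le_trans hx.2 (by norm_num)))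
              (hderiv_nonneg x hx0)
        _ ≤ A * (2 * π * Real.exp (-π * x)) :=
            mul_le_mul_of_nonneg_left (hderiv_le x hx0) hA.le
        _ ≤ A * (2*π) := by
            apply mul_le_mul_of_nonneg_left _ hA.le
            have : Real.exp (-π * x) ≤ 1 := by
              apply Real.exp_le_one_iff.2
              nlinarith [Real.pi_pos]
            nlinarith [Real.pi_pos]
    · exact integrableOn_const (by simp [Real.volume_Ioc])
  -- piece 2
  set c2 := A * (2 * π * Real.exp (-(π/2))) with hc2def
  have hb2 : ∀ x ∈ Ioc (1/2:ℝ) 1, F x ≤ c2 := by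
    intro x hx
    have hx0 : (0:ℝ) < x := lt_trans (by norm_num) hx.1
    calc F x ≤ A * deriv φ x :=
          mul_le_mul_of_nonneg_right (hbase x hx0 hx.2) (hderiv_nonneg x hx0)
      _ ≤ A * (2 * π * Real.exp (-π * x)) :=
          mul_le_mul_of_nonneg_left (hderiv_le x hx0) hA.le
      _ ≤ c2 := by
          rw [hc2def]
          apply mul_le_mul_of_nonneg_left _ hA.le
          have : Real.exp (-π * x) ≤ Real.exp (-(π/2)) := by
            apply Real.exp_le_exp.2
            nlinarith [Real.pi_pos, hx.1]
          nlinarith [Real.pi_pos]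
  have hF2i : IntegrableOn F (Ioc (1/2) 1) := by
    apply Integrable.mono' (g := fun _ => c2) _ (hFm.aestronglyMeasurable.restrict)
    · filter_upwards [ae_restrict_mem measurableSet_Ioc] with x hx
      have hx0 : (0:ℝ) < x := lt_trans (by norm_num) hx.1
      rw [Real.norm_of_nonneg (hFnn x hx0)]
      exact hb2 x hx
    · exact integrableOn_const (by simp [Real.volume_Ioc])
  -- piece 3
  set c3 := A * (2 * π * Real.exp (1 - π)) with hc3def
  set g3 := fun x : ℝ => c3 * (Real.exp (-x) * x ^ (σ/2)) with hg3def
  have hGi : IntegrableOn (fun x : ℝ => Real.exp (-x) * x ^ (σ/2)) (Ioi 0) := by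
    have h := Real.GammaIntegral_convergent (show (0:ℝ) < σ/2 + 1 by positivity)
    have he : σ/2 + 1 - 1 = σ/2 := by ring
    rw [he] at h
    exact h
  have hg3i : IntegrableOn g3 (Ioi 1) := by
    exact ((hGi.mono_set (Set.Ioi_subset_Ioi (by norm_num))).const_mul c3)
  have hc3nn : 0 ≤ c3 := by positivity
  have hb3 : ∀ x ∈ Ioi (1:ℝ), F x ≤ g3 x := by
    intro x hx
    have hx1 : (1:ℝ) < x := hx
    have hx0 : (0:ℝ) < x := lt_trans one_pos hx1
    have hpow : (1 + x ^ 2) ^ (σ/4) ≤ A * x ^ (σ/2) := by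
      have h1 : (1 + x ^ 2) ^ (σ/4) ≤ (2 * x^2) ^ (σ/4) :=
        Real.rpow_le_rpow (by positivity) (by nlinarith) (by positivity)
      have h2 : (2 * x^2 : ℝ) ^ (σ/4) = A * x ^ (σ/2) := by
        rw [Real.mul_rpow (by norm_num) (by positivity), hAdef]
        congr 1
        rw [← Real.rpow_natCast x 2, ← Real.rpow_mul hx0.le]
        congr 1
        push_cast
        ring
      rw [h2] at h1; exact h1
    have hexp : Real.exp (-π * x) ≤ Real.exp (1 - π) * Real.exp (-x) := by
      rw [← Real.exp_add]
      apply Real.exp_le_exp.2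
      nlinarith [Real.pi_gt_three]
    calc F x ≤ A * x ^ (σ/2) * deriv φ x :=
          mul_le_mul_of_nonneg_right hpow (hderiv_nonneg x hx0)
      _ ≤ A * x ^ (σ/2) * (2 * π * Real.exp (-π * x)) := by
          apply mul_le_mul_of_nonneg_left (hderiv_le x hx0)
          positivity
      _ ≤ A * x ^ (σ/2) * (2 * π * (Real.exp (1 - π) * Real.exp (-x))) := by
          apply mul_le_mul_of_nonneg_left _ (by positivity)
          apply mul_le_mul_of_nonneg_left hexp (by positivity)
      _ = g3 x := by rw [hg3def, hc3def]; ring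
  have hF3i : IntegrableOn F (Ioi 1) := by
    apply Integrable.mono' hg3i (hFm.aestronglyMeasurable.restrict)
    filter_upwards [ae_restrict_mem measurableSet_Ioi] with x hx
    have hx0 : (0:ℝ) < x := lt_trans one_pos hx
    rw [Real.norm_of_nonneg (hFnn x hx0)]
    exact hb3 x hx
  -- splitting
  have hdisj1 : Disjoint (Ioc (0:ℝ) (1/2)) (Ioc (1/2:ℝ) 1) := by
    rw [Set.disjoint_left]
    rintro a ha hb
    exact absurd ha.2 (not_le.2 hb.1)
  have hdisj2 : Disjoint (Ioc (0:ℝ) 1) (Ioi (1:ℝ)) := by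
    rw [Set.disjoint_left]
    rintro a ha hb
    exact absurd ha.2 (not_le.2 hb)
  have hsplit1 : Ioc (0:ℝ) (1/2) ∪ Ioc (1/2:ℝ) 1 = Ioc (0:ℝ) 1 :=
    Set.Ioc_union_Ioc_eq_Ioc (by norm_num) (by norm_num)
  have hsplit2 : Ioc (0:ℝ) 1 ∪ Ioi (1:ℝ) = Ioi (0:ℝ) :=
    Set.Ioc_union_Ioi_eq_Ioi (by norm_num)
  have hF01i : IntegrableOn F (Ioc 0 1) := by
    rw [← hsplit1]; exact hF1i.union hF2i
  have hEq : ∫ x in Ioi (0:ℝ), F x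
      = (∫ x in Ioc (0:ℝ) (1/2), F x) + (∫ x in Ioc (1/2:ℝ) 1, F x)
        + (∫ x in Ioi (1:ℝ), F x) := by
    rw [← hsplit2, setIntegral_union hdisj2 measurableSet_Ioi hF01i hF3i,
      ← hsplit1, setIntegral_union hdisj1 measurableSet_Ioc hF1i hF2i]
  -- bound 1
  have hI1 : (∫ x in Ioc (0:ℝ) (1/2), F x) ≤ A * 1.04 := by
    have h1 : (∫ x in Ioc (0:ℝ) (1/2), F x) ≤ ∫ x in Ioc (0:ℝ) (1/2), g1 x :=
      setIntegral_mono_on hF1i hg1i measurableSet_Ioc hb1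
    have h2 : (∫ x in Ioc (0:ℝ) (1/2), g1 x)
        = (A * (22/5)) * ∫ x in Ioc (0:ℝ) (1/2), x ^ ((1:ℝ)/2) := by
      rw [← MeasureTheory.integral_const_mul]
      apply setIntegral_congr_fun measurableSet_Ioc
      intro x _; simp [hg1def]; ring
    have h3 : (∫ x in Ioc (0:ℝ) (1/2), x ^ ((1:ℝ)/2)) ≤ 0.236 := by
      have he : (∫ x in Ioc (0:ℝ) (1/2), x ^ ((1:ℝ)/2))
          = ∫ x in (0:ℝ)..(1/2), x ^ ((1:ℝ)/2) :=
        (intervalIntegral.integral_of_le (by norm_num)).symm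
      rw [he, integral_rpow (Or.inl (by norm_num))]
      rw [Real.zero_rpow (by norm_num)]
      have hval : ((1:ℝ)/2) ^ ((1:ℝ)/2 + 1) ≤ 0.354 := by
        set w := ((1:ℝ)/2) ^ ((1:ℝ)/2 + 1) with hw
        have hwnn : 0 ≤ w := Real.rpow_nonneg (by norm_num) _
        have hwsq : w^2 = 1/8 := by
          rw [hw, ← Real.rpow_natCast (((1:ℝ)/2) ^ ((1:ℝ)/2+1)) 2,
            ← Real.rpow_mul (by norm_num)]
          norm_num
        nlinarith
      rw [div_le_iff₀ (by norm_num)]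
      nlinarith
    calc (∫ x in Ioc (0:ℝ) (1/2), F x) ≤ (A * (22/5)) * ∫ x in Ioc (0:ℝ) (1/2), x ^ ((1:ℝ)/2) := by
          rw [← h2]; exact h1
      _ ≤ (A * (22/5)) * 0.236 := by
          apply mul_le_mul_of_nonneg_left h3 (by positivity)
      _ ≤ A * 1.04 := by nlinarith
  -- bound 2
  have hI2 : (∫ x in Ioc (1/2:ℝ) 1, F x) ≤ A * 0.71 := by
    have h1 : (∫ x in Ioc (1/2:ℝ) 1, F x) ≤ ∫ _x in Ioc (1/2:ℝ) 1, c2 :=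
      setIntegral_mono_on hF2i (integrableOn_const (by simp [Real.volume_Ioc]))
        measurableSet_Ioc hb2
    have h2 : (∫ _x in Ioc (1/2:ℝ) 1, c2) = (1/2) * c2 := by
      rw [setIntegral_const, Real.volume_real_Ioc, smul_eq_mul]
      norm_num
    rw [h2] at h1
    have h3 : (1/2) * c2 ≤ A * 0.71 := by
      rw [hc2def]
      have := num1
      nlinarith [hA]
    linarith
  -- bound 3
  have hI3 : (∫ x in Ioi (1:ℝ), F x) ≤ c3 * Real.Gamma (1 + σ/2) := by
    have h1 : (∫ x in Ioi (1:ℝ), F x) ≤ ∫ x in Ioi (1:ℝ), g3 x :=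
      setIntegral_mono_on hF3i hg3i measurableSet_Ioi hb3
    have h2 : (∫ x in Ioi (1:ℝ), g3 x)
        = c3 * ∫ x in Ioi (1:ℝ), Real.exp (-x) * x ^ (σ/2) := by
      rw [hg3def, MeasureTheory.integral_const_mul]
    have h3 : (∫ x in Ioi (1:ℝ), Real.exp (-x) * x ^ (σ/2))
        ≤ ∫ x in Ioi (0:ℝ), Real.exp (-x) * x ^ (σ/2) := by
      apply setIntegral_mono_set hGi
      · filter_upwards [MeasureTheory.ae_restrict_mem measurableSet_Ioi] with x hx
        have hx0 : (0:ℝ) < x := hx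
        positivity
      · exact Filter.Eventually.of_forall fun x hx => lt_trans one_pos hx
    have h4 : (∫ x in Ioi (0:ℝ), Real.exp (-x) * x ^ (σ/2)) = Real.Gamma (1 + σ/2) := by
      have := Real.integral_rpow_mul_exp_neg_mul_Ioi
        (show (0:ℝ) < σ/2 + 1 by positivity) (show (0:ℝ) < 1 by norm_num)
      simp only [one_mul, Real.one_rpow, div_one] at this
      rw [show σ/2 + 1 - 1 = σ/2 by ring] at this
      rw [show (1:ℝ) + σ/2 = σ/2 + 1 by ring, ← this]
      apply setIntegral_congr_fun measurableSet_Ioi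
      intro x _; ring
    calc (∫ x in Ioi (1:ℝ), F x) ≤ c3 * ∫ x in Ioi (1:ℝ), Real.exp (-x) * x ^ (σ/2) := by
          rw [← h2]; exact h1
      _ ≤ c3 * ∫ x in Ioi (0:ℝ), Real.exp (-x) * x ^ (σ/2) :=
          mul_le_mul_of_nonneg_left h3 hc3nn
      _ = c3 * Real.Gamma (1 + σ/2) := by rw [h4]
  -- final numeric assembly
  have hG45 : (4:ℝ)/5 ≤ Real.Gamma (1 + σ/2) := gamma_lb (by positivity)
  have hc3le : c3 ≤ A * (3/4) := by
    rw [hc3def]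
    nlinarith [num2, hA]
  have hGpos : (0:ℝ) < Real.Gamma (1 + σ/2) := Real.Gamma_pos_of_pos (by positivity)
  rw [hEq]
  have hI3' : (∫ x in Ioi (1:ℝ), F x) ≤ A * (3/4) * Real.Gamma (1 + σ/2) :=
    le_trans hI3 (mul_le_mul_of_nonneg_right hc3le hGpos.le)
  nlinarith [hI1, hI2, hI3', hG45, hA, hGpos]
end
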